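/- arXiv:1304.0176 — 7 statements merged into one kernel-verified Lean document; each statement's English description precedes it below -/
import Mathlib

section
/- Let X be a complex topological vector space, T a continuous linear operator on X, and x ∈ X. If the closure of the set {λ T^n x : λ ∈ 𝕋, n ≥ 0} has nonempty interior, then {λ T^n x : λ ∈ 𝕋, n ≥ 0} is dense in X. -/
open Filter Topology

set_option linter.unusedSectionVars false
set_option maxHeartbeats 1000000

namespace Stmt4Aux

open Polynomial Set Pointwise


open Polynomial Set

lemma geom_interval {r : ℝ} (hr : 0 ≤ r) {a b : ℝ} (ha : 0 < a) (hab : a < b)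
    (h : Set.Ioo a b ⊆ closure {t : ℝ | ∃ n : ℕ, t = r ^ n}) : False := by
  classical
  set S := {t : ℝ | ∃ n : ℕ, t = r ^ n} with hS
  have hfin : (S ∩ Set.Ioo a b).Finite := by
    rcases lt_trichotomy r 1 with hr1 | rfl | hr1
    · rcases eq_or_lt_of_le hr with hr0 | hr0
      · refine ((Set.finite_singleton (0:ℝ)).insert 1).subset ?_
        rintro t ⟨⟨n, rfl⟩, -⟩
        rcases Nat.eq_zero_or_pos n with rfl | hn
        · simp
        · simp [← hr0, zero_pow hn.ne']
      · have htend := tendsto_pow_atTop_nhds_zero_of_lt_one hr hr1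
        have hev : ∀ᶠ n : ℕ in atTop, r ^ n < a := htend.eventually_lt_const ha
        obtain ⟨N, hN⟩ := eventually_atTop.1 hev
        refine ((Set.finite_lt_nat N).image (fun n => r ^ n)).subset ?_
        rintro t ⟨⟨n, rfl⟩, hmem⟩
        refine ⟨n, ?_, rfl⟩
        by_contra hn
        exact absurd hmem.1 (not_lt.2 (hN n (not_lt.1 hn)).le)
    · refine (Set.finite_singleton (1:ℝ)).subset ?_
      rintro t ⟨⟨n, rfl⟩, -⟩; simp
    · have htend := tendsto_pow_atTop_atTop_of_one_lt hr1
      have hev : ∀ᶠ n : ℕ in atTop, b < r ^ n := htend.eventually (eventually_gt_atTop b)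
      obtain ⟨N, hN⟩ := eventually_atTop.1 hev
      refine ((Set.finite_lt_nat N).image (fun n => r ^ n)).subset ?_
      rintro t ⟨⟨n, rfl⟩, hmem⟩
      refine ⟨n, ?_, rfl⟩
      by_contra hn
      exact absurd hmem.2 (not_lt.2 (hN n (not_lt.1 hn)).le)
  have h2 : Set.Ioo a b ⊆ S ∩ Set.Ioo a b := by
    intro t ht
    have h3 : t ∈ closure (S ∩ Set.Ioo a b) := by
      rw [mem_closure_iff]
      intro O hO htO
      obtain ⟨s, hs1, hs2⟩ := mem_closure_iff.1 (h ht) (O ∩ Set.Ioo a b)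
        (hO.inter isOpen_Ioo) ⟨htO, ht⟩
      exact ⟨s, hs1.1, hs2, hs1.2⟩
    rwa [hfin.isClosed.closure_eq] at h3
  exact (Set.Ioo_infinite hab) (hfin.subset h2)

lemma L3C (μ c₀ : ℂ) (B : Set ℂ)
    (hB : ∀ b ∈ B, ∃ l : ℂ, ‖l‖ = 1 ∧ ∃ n : ℕ, b = l * μ ^ n * c₀)
    (h : (interior (closure B)).Nonempty) : False := by
  classical
  set r := ‖μ‖ with hrdef
  set a := ‖c₀‖ with hadef
  set MS := {t : ℝ | ∃ n : ℕ, t = r ^ n * a} with hMS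
  obtain ⟨w₀, hw₀⟩ := h
  obtain ⟨ρ, hρ, hball⟩ := Metric.isOpen_iff.1 isOpen_interior w₀ hw₀
  have hballB : Metric.ball w₀ ρ ⊆ closure B := hball.trans interior_subset
  have hmod : ∀ w ∈ closure B, ‖w‖ ∈ closure MS := by
    intro w hw
    refine map_mem_closure continuous_norm hw ?_
    rintro bb hbb
    obtain ⟨l, hl, n, rfl⟩ := hB bb hbb
    exact ⟨n, by simp [norm_mul, norm_pow, hl, hrdef, hadef]⟩
  have habs0 : (0:ℝ) ≤ ‖w₀‖ := norm_nonneg w₀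
  have hIoo : Set.Ioo (‖w₀‖) (‖w₀‖ + ρ) ⊆ closure MS := by
    intro s hs
    have hs0 : 0 < s := lt_of_le_of_lt habs0 hs.1
    by_cases hw : w₀ = 0
    · have habsz : ‖((s:ℂ))‖ = s := by
        rw [Complex.norm_real, Real.norm_eq_abs, abs_of_pos hs0]
      have hz : (s:ℂ) ∈ Metric.ball w₀ ρ := by
        rw [Metric.mem_ball, hw, dist_zero_right, habsz]
        have := hs.2; rw [hw] at this; simpa using this
      have := hmod _ (hballB hz)
      rwa [habsz] at this
    · have hw0 : 0 < ‖w₀‖ := by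
        rcases eq_or_lt_of_le habs0 with h' | h'
        · exact absurd (norm_eq_zero.1 h'.symm) hw
        · exact h'
      set z : ℂ := ((s / ‖w₀‖ : ℝ) : ℂ) * w₀ with hzdef
      have habsz : ‖z‖ = s := by
        rw [hzdef, norm_mul, Complex.norm_real, Real.norm_eq_abs, abs_of_pos (div_pos hs0 hw0)]
        field_simp
      have hzball : z ∈ Metric.ball w₀ ρ := by
        rw [Metric.mem_ball, Complex.dist_eq]
        have hzw : z - w₀ = ((s / ‖w₀‖ - 1 : ℝ) : ℂ) * w₀ := by
          rw [hzdef]; push_cast; ring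
        rw [hzw, norm_mul, Complex.norm_real, Real.norm_eq_abs,
          abs_of_nonneg (by rw [sub_nonneg, le_div_iff₀ hw0, one_mul]; exact hs.1.le)]
        rw [sub_mul, div_mul_cancel₀ _ (ne_of_gt hw0), one_mul]
        linarith [hs.2]
      have := hmod _ (hballB hzball)
      rwa [habsz] at this
  set a' := ‖w₀‖ + ρ/3 with ha'def
  set b' := ‖w₀‖ + ρ/2 with hb'def
  have ha' : 0 < a' := by positivity
  have ha'b' : a' < b' := by simp only [ha'def, hb'def]; linarith
  have hsub : Set.Ioo a' b' ⊆ closure MS := by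
    intro s hs
    refine hIoo ⟨?_, ?_⟩
    · have := hs.1; simp only [ha'def] at this; linarith
    · have := hs.2; simp only [hb'def] at this; linarith
  by_cases hc : a = 0
  · have hMS0 : MS ⊆ {(0:ℝ)} := by rintro t ⟨n, rfl⟩; simp [hc]
    have hcl : closure MS ⊆ {(0:ℝ)} := closure_minimal hMS0 isClosed_singleton
    have hmem : (a' + b')/2 ∈ Set.Ioo a' b' := ⟨by linarith, by linarith⟩
    have := hcl (hsub hmem)
    simp only [Set.mem_singleton_iff] at this
    linarith
  · have ha0 : 0 < a := lt_of_le_of_ne (norm_nonneg _) (Ne.symm hc)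
    have hMSim : MS = (fun t => t * a) '' {t : ℝ | ∃ n : ℕ, t = r ^ n} := by
      ext t; constructor
      · rintro ⟨n, rfl⟩; exact ⟨r ^ n, ⟨n, rfl⟩, rfl⟩
      · rintro ⟨u, ⟨n, rfl⟩, rfl⟩; exact ⟨n, rfl⟩
    have hclim : closure MS = (fun t => t * a) '' closure {t : ℝ | ∃ n : ℕ, t = r ^ n} := by
      rw [hMSim]
      exact ((Homeomorph.mulRight₀ a (ne_of_gt ha0)).image_closure _).symm
    refine geom_interval (r := r) (norm_nonneg μ) (a := a'/a) (b := b'/a)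
      (div_pos ha' ha0) (by gcongr) ?_
    intro t ht
    have hta : t * a ∈ Set.Ioo a' b' :=
      ⟨(div_lt_iff₀ ha0).1 ht.1, (lt_div_iff₀ ha0).1 ht.2⟩
    have hmem := hsub hta
    rw [hclim] at hmem
    obtain ⟨u, hu, hue⟩ := hmem
    have hut : u = t := mul_right_cancel₀ (ne_of_gt ha0) hue
    rwa [← hut]

lemma subsingleton_of_line {Y : Type*} [AddCommGroup Y] [Module ℂ Y] [TopologicalSpace Y]
    [IsTopologicalAddGroup Y] [ContinuousSMul ℂ Y] [T2Space Y]
    (z : Y) (μ c₀ : ℂ) (A : Set Y)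
    (hA : ∀ a ∈ A, ∃ l : ℂ, ‖l‖ = 1 ∧ ∃ n : ℕ, a = (l * μ ^ n * c₀) • z)
    (hint : (interior (closure A)).Nonempty) : Subsingleton Y := by
  classical
  have hzero : ({(0:Y)} ∈ 𝓝 (0:Y)) → ∀ y : Y, y = 0 := by
    intro h0 y
    have hcont : Continuous fun c : ℂ => c • y := continuous_id.smul continuous_const
    have hc : Tendsto (fun c : ℂ => c • y) (𝓝 0) (𝓝 (0:Y)) := by
      have := hcont.tendsto 0
      simpa using this
    have hev : ∀ᶠ c : ℂ in 𝓝 0, c • y ∈ ({0} : Set Y) := hc.eventually_mem h0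
    have hne : ∀ᶠ c : ℂ in 𝓝[≠] (0:ℂ), c • y ∈ ({0} : Set Y) ∧ c ∈ ({(0:ℂ)}ᶜ : Set ℂ) :=
      (hev.filter_mono nhdsWithin_le_nhds).and eventually_mem_nhdsWithin
    obtain ⟨c, hcy, hc0⟩ := hne.exists
    have hcy' : c • y = 0 := hcy
    rcases smul_eq_zero.1 hcy' with h' | h'
    · exact absurd h' hc0
    · exact h'
  by_cases hz : z = 0
  · have hA0 : A ⊆ {(0:Y)} := by
      intro a ha; obtain ⟨l, hl, n, rfl⟩ := hA a ha; simp [hz]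
    have hcl : closure A ⊆ {(0:Y)} := closure_minimal hA0 isClosed_singleton
    obtain ⟨y, hy⟩ := hint
    have hy0 : y = 0 := hcl (interior_subset hy)
    have h0 : ({(0:Y)} ∈ 𝓝 (0:Y)) :=
      mem_nhds_iff.2 ⟨interior (closure A), (interior_subset.trans hcl), isOpen_interior,
        hy0 ▸ hy⟩
    exact ⟨fun a b => by rw [hzero h0 a, hzero h0 b]⟩
  · rcases subsingleton_or_nontrivial Y with hY | hY
    · exact hY
    exfalso
    have hcl : IsClosed ((ℂ ∙ z : Submodule ℂ Y) : Set Y) :=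
      Submodule.closed_of_finiteDimensional _
    have hAsub : A ⊆ ((ℂ ∙ z : Submodule ℂ Y) : Set Y) := by
      intro a ha
      obtain ⟨l, hl, n, rfl⟩ := hA a ha
      exact Submodule.smul_mem _ _ (Submodule.mem_span_singleton_self z)
    have h1 : (interior ((ℂ ∙ z : Submodule ℂ Y) : Set Y)).Nonempty :=
      hint.mono (interior_mono (closure_minimal hAsub hcl))
    have h2 : (ℂ ∙ z : Submodule ℂ Y) = ⊤ := Submodule.eq_top_of_nonempty_interior' _ h1
    have hinj : Function.Injective (LinearMap.toSpanSingleton ℂ Y z) := by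
      intro c d hcd
      have : (c - d) • z = 0 := by
        simp only [LinearMap.toSpanSingleton_apply] at hcd
        rw [sub_smul, hcd, sub_self]
      rcases smul_eq_zero.1 this with h' | h'
      · exact sub_eq_zero.1 h'
      · exact absurd h' hz
    have hsurj : Function.Surjective (LinearMap.toSpanSingleton ℂ Y z) := by
      intro y
      have : y ∈ (ℂ ∙ z : Submodule ℂ Y) := h2 ▸ Submodule.mem_top
      obtain ⟨c, hc⟩ := Submodule.mem_span_singleton.1 this
      exact ⟨c, hc⟩
    haveI : FiniteDimensional ℂ Y :=
      Module.Finite.of_surjective (LinearMap.toSpanSingleton ℂ Y z) hsurj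
    let e := (LinearEquiv.ofBijective (LinearMap.toSpanSingleton ℂ Y z)
      ⟨hinj, hsurj⟩).toContinuousLinearEquiv
    have heval : ∀ c : ℂ, e c = c • z := fun c => rfl
    set B : Set ℂ := (⇑e.symm) '' A with hBdef
    have hB : ∀ b ∈ B, ∃ l : ℂ, ‖l‖ = 1 ∧ ∃ n : ℕ, b = l * μ ^ n * c₀ := by
      rintro b ⟨y, hy, rfl⟩
      obtain ⟨l, hl, n, rfl⟩ := hA y hy
      refine ⟨l, hl, n, ?_⟩
      have : (l * μ ^ n * c₀) • z = e (l * μ ^ n * c₀) := rfl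
      rw [this, ContinuousLinearEquiv.symm_apply_apply]
    have htrans : (interior (closure B)).Nonempty := by
      have h1 : closure B = (⇑e.symm) '' closure A := by
        rw [hBdef]
        exact (e.symm.toHomeomorph.image_closure A).symm
      have h2 : interior (closure B) = (⇑e.symm) '' interior (closure A) := by
        rw [h1]
        exact (e.symm.toHomeomorph.image_interior (closure A)).symm
      rw [h2]
      exact hint.image _
    exact L3C μ c₀ B hB htrans



section AuxTop

lemma interior_union_empty {α : Type*} [TopologicalSpace α] {A B : Set α} (hA : IsClosed A)
    (hiA : interior A = ∅) (hiB : interior B = ∅) : interior (A ∪ B) = ∅ := by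
  rw [Set.eq_empty_iff_forall_notMem]
  intro t ht
  have hopen : IsOpen (interior (A ∪ B) ∩ Aᶜ) := isOpen_interior.inter hA.isOpen_compl
  have hsubB : interior (A ∪ B) ∩ Aᶜ ⊆ B := by
    intro y hy
    rcases interior_subset hy.1 with h' | h'
    · exact absurd h' hy.2
    · exact h'
  have h1 : interior (A ∪ B) ∩ Aᶜ ⊆ interior B := interior_maximal hsubB hopen
  rw [hiB, Set.subset_empty_iff, Set.eq_empty_iff_forall_notMem] at h1
  have h2 : interior (A ∪ B) ⊆ A := by
    intro y hy
    by_contra hyA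
    exact h1 y ⟨hy, hyA⟩
  have h3 : interior (A ∪ B) ⊆ interior A := interior_maximal h2 isOpen_interior
  rw [hiA, Set.subset_empty_iff, Set.eq_empty_iff_forall_notMem] at h3
  exact h3 t ht

lemma interior_finite_union_empty {α : Type*} [TopologicalSpace α] (s : Finset ℕ)
    (f : ℕ → Set α) (hcl : ∀ j, IsClosed (f j)) (hint : ∀ j, interior (f j) = ∅) :
    interior (⋃ j ∈ s, f j) = ∅ := by
  classical
  induction s using Finset.induction_on with
  | empty => simp
  | insert a s ha ih =>
    rw [Finset.set_biUnion_insert]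
    exact interior_union_empty (hcl _) (hint _) ih

end AuxTop

variable {X : Type*} [AddCommGroup X] [Module ℂ X] [TopologicalSpace X]
  [IsTopologicalAddGroup X] [ContinuousSMul ℂ X]

def orb (T : X →L[ℂ] X) (x : X) : Set X :=
  {y : X | ∃ l : ℂ, ‖l‖ = 1 ∧ ∃ n : ℕ, y = l • (T ^ n) x}

lemma x_mem_orb (T : X →L[ℂ] X) (x : X) : x ∈ orb T x :=
  ⟨1, by simp, 0, by simp⟩

lemma smul_pow_closure (T : X →L[ℂ] X) (x : X) {l : ℂ} (hl : ‖l‖ = 1) (n : ℕ)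
    {f : X} (hf : f ∈ closure (orb T x)) : l • (T ^ n) f ∈ closure (orb T x) := by
  have hcont : Continuous fun y : X => l • (T ^ n) y := ((T ^ n).continuous).const_smul l
  have hmaps : Set.MapsTo (fun y : X => l • (T ^ n) y) (orb T x) (orb T x) := by
    rintro y ⟨m, hm, k, rfl⟩
    show l • (T ^ n) (m • (T ^ k) x) ∈ orb T x
    refine ⟨l * m, ?_, n + k, ?_⟩
    · rw [norm_mul, hl, hm, one_mul]
    · rw [map_smul, smul_smul, pow_add, ContinuousLinearMap.mul_apply]
  exact map_mem_closure (f := fun y : X => l • (T ^ n) y) hcont hf hmaps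

lemma pow_mem_closure (T : X →L[ℂ] X) (x : X) (n : ℕ)
    {f : X} (hf : f ∈ closure (orb T x)) : (T ^ n) f ∈ closure (orb T x) := by
  simpa using smul_pow_closure T x (l := 1) (by simp) n hf

lemma rule4 (T : X →L[ℂ] X) (x : X) (p : ℂ[X])
    (hp : (aeval T p : X →L[ℂ] X) x ∈ closure (orb T x)) :
    ∀ f ∈ closure (orb T x), (aeval T p : X →L[ℂ] X) f ∈ closure (orb T x) := by
  intro f hf
  have hcont : Continuous (aeval T p : X →L[ℂ] X) := (aeval T p : X →L[ℂ] X).continuous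
  have hmaps : Set.MapsTo (aeval T p : X →L[ℂ] X) (orb T x) (closure (orb T x)) := by
    rintro y ⟨m, hm, k, rfl⟩
    have hcomm : (aeval T p : X →L[ℂ] X) ((T ^ k) x) = (T ^ k) ((aeval T p : X →L[ℂ] X) x) := by
      have hXk : (T : X →L[ℂ] X) ^ k = (aeval T (Polynomial.X ^ k : ℂ[X]) : X →L[ℂ] X) := by
        rw [map_pow, aeval_X]
      have h1 : (aeval T p : X →L[ℂ] X) * (T ^ k) = (T ^ k) * (aeval T p : X →L[ℂ] X) := by
        rw [hXk, ← map_mul, ← map_mul, mul_comm]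
      calc (aeval T p : X →L[ℂ] X) ((T ^ k) x)
          = ((aeval T p : X →L[ℂ] X) * (T ^ k)) x := rfl
        _ = ((T ^ k) * (aeval T p : X →L[ℂ] X)) x := by rw [h1]
        _ = (T ^ k) ((aeval T p : X →L[ℂ] X) x) := rfl
    show (aeval T p : X →L[ℂ] X) (m • (T ^ k) x) ∈ closure (orb T x)
    rw [map_smul, hcomm]
    exact smul_pow_closure T x hm k hp
  have := map_mem_closure hcont hf hmaps
  rwa [closure_closure] at this

lemma five (T : X →L[ℂ] X) (x : X)
    (hno : ∀ j : ℕ, ¬ Dense ((ℂ ∙ ((T ^ j) x) : Submodule ℂ X) : Set X)) (M : ℕ) :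
    interior (closure (orb T x)) ⊆ closure (orb T ((T ^ M) x)) := by
  intro u hu
  by_contra hu2
  set D : ℕ → Set X := fun j => ((ℂ ∙ ((T ^ j) x) : Submodule ℂ X).topologicalClosure : Set X)
    with hD
  set C : Set X := ⋃ j ∈ Finset.range M, D j with hC
  have hDclosed : ∀ j, IsClosed (D j) := fun j => Submodule.isClosed_topologicalClosure _
  have hDint : ∀ j, interior (D j) = ∅ := by
    intro j
    rw [Set.eq_empty_iff_forall_notMem]
    intro y hy
    have htop : (ℂ ∙ ((T ^ j) x) : Submodule ℂ X).topologicalClosure = ⊤ :=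
      Submodule.eq_top_of_nonempty_interior' _ ⟨y, hy⟩
    apply hno j
    rw [dense_iff_closure_eq, ← Submodule.topologicalClosure_coe, htop]
    rfl
  have hCclosed : IsClosed C := by
    refine Set.Finite.isClosed_biUnion (Finset.finite_toSet _) fun j _ => hDclosed j
  have hCint : interior C = ∅ := interior_finite_union_empty _ _ hDclosed hDint
  have horb : orb T x ⊆ C ∪ orb T ((T ^ M) x) := by
    rintro y ⟨l, hl, n, rfl⟩
    by_cases hn : n < M
    · left
      refine Set.mem_biUnion (Finset.mem_range.2 hn) ?_
      exact Submodule.le_topologicalClosure _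
        (Submodule.smul_mem _ _ (Submodule.mem_span_singleton_self _))
    · right
      refine ⟨l, hl, n - M, ?_⟩
      have hnm : n - M + M = n := by omega
      rw [← ContinuousLinearMap.mul_apply, ← pow_add, hnm]
  have hsubcl : closure (orb T x) ⊆ C ∪ closure (orb T ((T ^ M) x)) := by
    refine closure_minimal ?_ (hCclosed.union isClosed_closure)
    exact horb.trans (Set.union_subset_union_right C subset_closure)
  have hVsub : interior (closure (orb T x)) ∩ (closure (orb T ((T ^ M) x)))ᶜ ⊆ C := by
    intro v hv
    rcases hsubcl (interior_subset hv.1) with h' | h'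
    · exact h'
    · exact absurd h' hv.2
  have hfin : interior (closure (orb T x)) ∩ (closure (orb T ((T ^ M) x)))ᶜ ⊆ interior C :=
    interior_maximal hVsub (isOpen_interior.inter isClosed_closure.isOpen_compl)
  rw [hCint] at hfin
  exact hfin ⟨hu, hu2⟩

lemma dense_poly_values (T : X →L[ℂ] X) (x : X)
    (h : (interior (closure (orb T x))).Nonempty) :
    Dense {y : X | ∃ p : ℂ[X], y = (aeval T p : X →L[ℂ] X) x} := by
  set V : Submodule ℂ X := Submodule.span ℂ (Set.range fun n : ℕ => (T ^ n) x) with hV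
  have hdense : Dense (V : Set X) := by
    have horb : orb T x ⊆ (V : Set X) := by
      rintro y ⟨l, hl, n, rfl⟩
      exact Submodule.smul_mem _ _ (Submodule.subset_span ⟨n, rfl⟩)
    have htop : V.topologicalClosure = ⊤ := by
      refine Submodule.eq_top_of_nonempty_interior' _ ?_
      refine h.mono (interior_mono ?_)
      calc closure (orb T x) ⊆ closure (V : Set X) := closure_mono horb
        _ = (V.topologicalClosure : Set X) := (Submodule.topologicalClosure_coe _).symm
    rw [dense_iff_closure_eq, ← Submodule.topologicalClosure_coe, htop]
    rfl
  refine Dense.mono ?_ hdense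
  intro v hv
  refine Submodule.span_induction ?_ ?_ ?_ ?_ hv
  · rintro y ⟨n, rfl⟩
    exact ⟨Polynomial.X ^ n, by rw [map_pow, aeval_X]⟩
  · exact ⟨0, by simp⟩
  · rintro y z - - ⟨p, rfl⟩ ⟨q, rfl⟩
    exact ⟨p + q, by rw [map_add, ContinuousLinearMap.add_apply]⟩
  · rintro c y - ⟨p, rfl⟩
    refine ⟨Polynomial.C c * p, ?_⟩
    rw [map_mul, aeval_C, ContinuousLinearMap.mul_apply, ContinuousLinearMap.algebraMap_apply]



lemma dense_sub_range (T : X →L[ℂ] X) (x : X)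
    (h : (interior (closure (orb T x))).Nonempty) (β : ℂ) :
    Dense (Set.range fun y => T y - β • y) := by
  by_contra hd
  set L : X →ₗ[ℂ] X := (T : X →ₗ[ℂ] X) - β • LinearMap.id with hLdef
  have hLapp : ∀ y, L y = T y - β • y := fun y => rfl
  set Y : Submodule ℂ X := (LinearMap.range L).topologicalClosure with hYdef
  have hYcl : IsClosed (Y : Set X) := Submodule.isClosed_topologicalClosure _
  have hYne : Y ≠ ⊤ := by
    intro htop
    apply hd
    have hset : (Set.range fun y => T y - β • y) = ((LinearMap.range L : Submodule ℂ X) : Set X) := by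
      ext y
      constructor
      · rintro ⟨w, rfl⟩; exact ⟨w, rfl⟩
      · rintro ⟨w, rfl⟩; exact ⟨w, rfl⟩
    rw [dense_iff_closure_eq, hset, ← Submodule.topologicalClosure_coe, ← hYdef, htop]
    rfl
  haveI hYcl' : IsClosed (Y : Set X) := hYcl
  set π := Y.mkQ with hπ
  have hπcont : Continuous π := continuous_quot_mk
  have hπT : ∀ y : X, π (T y) = β • π y := by
    intro y
    have hmem : T y - β • y ∈ Y := Submodule.le_topologicalClosure _ ⟨y, rfl⟩
    have heq : π (T y) = π (β • y) := by
      rw [hπ, Submodule.mkQ_apply, Submodule.mkQ_apply, Submodule.Quotient.eq]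
      exact hmem
    rw [heq, map_smul]
  have hπpow : ∀ (n : ℕ) (y : X), π ((T ^ n) y) = β ^ n • π y := by
    intro n
    induction n with
    | zero => intro y; simp
    | succ n ih =>
      intro y
      have hstep : (T ^ (n + 1)) y = (T ^ n) (T y) := by
        rw [pow_succ, ContinuousLinearMap.mul_apply]
      rw [hstep, ih (T y), hπT, smul_smul, ← pow_succ]
  set A : Set (X ⧸ Y) := π '' orb T x with hA
  have hAform : ∀ q ∈ A, ∃ l : ℂ, ‖l‖ = 1 ∧ ∃ n : ℕ, q = (l * β ^ n * 1) • π x := by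
    rintro q ⟨y, ⟨l, hl, n, rfl⟩, rfl⟩
    refine ⟨l, hl, n, ?_⟩
    rw [map_smul, hπpow, smul_smul, mul_one]
  have hopen : IsOpenMap π := Submodule.isOpenMap_mkQ Y
  have hintA : (interior (closure A)).Nonempty := by
    obtain ⟨u, hu⟩ := h
    have h1 : IsOpen (π '' interior (closure (orb T x))) := hopen _ isOpen_interior
    have h2 : π '' interior (closure (orb T x)) ⊆ closure A := by
      calc π '' interior (closure (orb T x)) ⊆ π '' closure (orb T x) :=
            Set.image_mono interior_subset
        _ ⊆ closure (π '' orb T x) := image_closure_subset_closure_image hπcont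
    exact ⟨π u, interior_maximal h2 h1 ⟨u, hu, rfl⟩⟩
  have hsub : Subsingleton (X ⧸ Y) := subsingleton_of_line (π x) β 1 A hAform hintA
  apply hYne
  rw [Submodule.eq_top_iff']
  intro y
  have hy : π y = π 0 := Subsingleton.elim _ _
  rw [map_zero] at hy
  exact (Submodule.Quotient.mk_eq_zero Y).1 hy



lemma aeval_pow_comm (T : X →L[ℂ] X) (p : ℂ[X]) (k : ℕ) (y : X) :
    (aeval T p : X →L[ℂ] X) ((T ^ k) y) = (T ^ k) ((aeval T p : X →L[ℂ] X) y) := by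
  have hXk : (T : X →L[ℂ] X) ^ k = (aeval T (Polynomial.X ^ k : ℂ[X]) : X →L[ℂ] X) := by
    rw [map_pow, aeval_X]
  have h1 : (aeval T p : X →L[ℂ] X) * (T ^ k) = (T ^ k) * (aeval T p : X →L[ℂ] X) := by
    rw [hXk, ← map_mul, ← map_mul, mul_comm]
  calc (aeval T p : X →L[ℂ] X) ((T ^ k) y)
      = ((aeval T p : X →L[ℂ] X) * (T ^ k)) y := rfl
    _ = ((T ^ k) * (aeval T p : X →L[ℂ] X)) y := by rw [h1]
    _ = (T ^ k) ((aeval T p : X →L[ℂ] X) y) := rfl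

lemma aeval_lin (T : X →L[ℂ] X) (γ : ℂ) (y : X) :
    (aeval T (Polynomial.X - Polynomial.C γ) : X →L[ℂ] X) y = T y - γ • y := by
  rw [map_sub, ContinuousLinearMap.sub_apply, aeval_X, aeval_C,
    ContinuousLinearMap.algebraMap_apply]

lemma aeval_C_apply (T : X →L[ℂ] X) (c : ℂ) (y : X) :
    (aeval T (Polynomial.C c) : X →L[ℂ] X) y = c • y := by
  rw [aeval_C, ContinuousLinearMap.algebraMap_apply]

section Chain

variable (T : X →L[ℂ] X) (x : X)

/-- `F` is invariant under all nonzero scalars. -/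
lemma cstar (hx : x ∈ interior (closure (orb T x))) :
    ∀ c : ℂ, c ≠ 0 → ∀ f ∈ closure (orb T x), c • f ∈ closure (orb T x) := by
  have hcont : Continuous fun c : ℂ => c • x := continuous_id.smul continuous_const
  have hnb : (fun c : ℂ => c • x) ⁻¹' interior (closure (orb T x)) ∈ 𝓝 (1 : ℂ) := by
    apply hcont.continuousAt.preimage_mem_nhds
    rw [show (1:ℂ) • x = x from one_smul ℂ x]
    exact isOpen_interior.mem_nhds hx
  obtain ⟨δ, hδ, hball⟩ := Metric.mem_nhds_iff.1 hnb
  have hstep : ∀ c : ℂ, dist c 1 < δ → ∀ f ∈ closure (orb T x),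
      c • f ∈ closure (orb T x) := by
    intro c hc f hf
    have hcx : c • x ∈ closure (orb T x) :=
      interior_subset (hball (by rwa [Metric.mem_ball]))
    have h2 := rule4 T x (Polynomial.C c) (by rwa [aeval_C_apply]) f hf
    rwa [aeval_C_apply] at h2
  have hT : ∀ l : ℂ, ‖l‖ = 1 → ∀ f ∈ closure (orb T x),
      l • f ∈ closure (orb T x) := by
    intro l hl f hf
    simpa using smul_pow_closure T x hl 0 hf
  intro c hc f hf
  set r : ℝ := ‖c‖ with hr
  have hr0 : 0 < r := by
    have := norm_pos_iff.2 hc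
    simpa [hr] using this
  have h1 : Filter.Tendsto (fun k : ℕ => Real.log r * (1 / (k + 1))) atTop (𝓝 0) := by
    simpa using tendsto_one_div_add_atTop_nhds_zero_nat.const_mul (Real.log r)
  have htend : Filter.Tendsto (fun k : ℕ => Real.exp (Real.log r * (1 / (k + 1)))) atTop
      (𝓝 1) := by
    have := (Real.continuous_exp.tendsto 0).comp h1
    simpa [Function.comp_def] using this
  have hev : ∀ᶠ k : ℕ in atTop,
      dist ((Real.exp (Real.log r * (1 / (k + 1))) : ℝ) : ℂ) 1 < δ := by
    have h2 : ∀ᶠ k : ℕ in atTop, dist (Real.exp (Real.log r * (1 / (k + 1)))) 1 < δ := by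
      have := Metric.tendsto_nhds.1 htend δ hδ
      exact this
    refine h2.mono fun k hk => ?_
    rw [show ((1:ℂ)) = ((1:ℝ):ℂ) by norm_num, Complex.dist_eq, ← Complex.ofReal_sub,
      Complex.norm_real, Real.norm_eq_abs]
    rwa [Real.dist_eq] at hk
  obtain ⟨k, hk⟩ := hev.exists
  set s : ℝ := Real.exp (Real.log r * (1 / (k + 1))) with hs
  have hspow : s ^ (k + 1) = r := by
    rw [hs, ← Real.exp_nat_mul]
    have : ((k:ℝ) + 1) * (Real.log r * (1 / ((k:ℝ) + 1))) = Real.log r := by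
      field_simp
    rw [show ((k+1 : ℕ) : ℝ) = (k : ℝ) + 1 by push_cast; ring, this, Real.exp_log hr0]
  have hind : ∀ (j : ℕ), ∀ f ∈ closure (orb T x), ((s : ℂ)) ^ j • f ∈ closure (orb T x) := by
    intro j
    induction j with
    | zero => intro f hf; simpa using hf
    | succ j ih =>
      intro f hf
      have h3 : ((s:ℂ)) ^ (j+1) • f = (s:ℂ) • (((s:ℂ)) ^ j • f) := by
        rw [smul_smul, ← pow_succ']
      rw [h3]
      exact hstep _ hk _ (ih f hf)
  have hl : ‖(c / (r : ℂ))‖ = 1 := by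
    rw [norm_div, Complex.norm_real, Real.norm_eq_abs, abs_of_pos hr0]
    field_simp
    exact hr.symm
  have hcs : c = (c / (r : ℂ)) * ((s : ℂ)) ^ (k+1) := by
    have h4 : ((s : ℂ)) ^ (k+1) = ((r:ℝ) : ℂ) := by
      rw [show ((s:ℂ))^(k+1) = (((s^(k+1) : ℝ)) : ℂ) by push_cast; ring, hspow]
    rw [h4]
    have hrne : ((r:ℝ):ℂ) ≠ 0 := by
      simpa using ne_of_gt hr0
    field_simp
  have h5 : c • f = (c / (r:ℂ)) • (((s:ℂ)) ^ (k+1) • f) := by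
    rw [smul_smul, ← hcs]
  rw [h5]
  exact hT _ hl _ (hind (k+1) f hf)

lemma zero_mem_F (hx : x ∈ interior (closure (orb T x))) : (0 : X) ∈ closure (orb T x) := by
  have hxF : x ∈ closure (orb T x) := subset_closure (x_mem_orb T x)
  have hmem : ∀ n : ℕ, ((1 : ℂ)/(n+1)) • x ∈ closure (orb T x) := by
    intro n
    refine cstar T x hx _ ?_ _ hxF
    have hne : ((n:ℂ) + 1) ≠ 0 := by
      have := Nat.cast_add_one_ne_zero (R := ℂ) n
      push_cast at this
      exact this
    exact one_div_ne_zero hne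
  have hlim : Filter.Tendsto (fun n : ℕ => ((1 : ℂ)/(n+1)) • x) atTop (𝓝 (0 : X)) := by
    have h1 : Filter.Tendsto (fun n : ℕ => ((1 : ℂ)/(n+1))) atTop (𝓝 0) := by
      have h2 : Filter.Tendsto (fun n : ℕ => ((1 : ℝ)/(n+1))) atTop (𝓝 0) :=
        tendsto_one_div_add_atTop_nhds_zero_nat
      have h3 : Filter.Tendsto (fun n : ℕ => (((1 : ℝ)/(n+1) : ℝ) : ℂ)) atTop (𝓝 ((0:ℝ):ℂ)) :=
        (Complex.continuous_ofReal.tendsto _).comp h2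
      have h4 : (fun n : ℕ => (((1 : ℝ)/(n+1) : ℝ) : ℂ)) = fun n : ℕ => ((1:ℂ)/(n+1)) := by
        funext n; push_cast; ring
      rw [h4] at h3
      simpa using h3
    have := h1.smul_const x
    simpa using this
  exact isClosed_closure.mem_of_tendsto hlim (Filter.Eventually.of_forall hmem)

lemma star2 (hx : x ∈ interior (closure (orb T x)))
    (hno : ∀ j : ℕ, ¬ Dense ((ℂ ∙ ((T ^ j) x) : Submodule ℂ X) : Set X))
    (p : ℂ[X]) (M : ℕ)
    (hm : ∀ m : ℕ, M ≤ m → (T ^ m) ((aeval T p : X →L[ℂ] X) x) ∈ closure (orb T x)) :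
    (aeval T p : X →L[ℂ] X) x ∈ closure (orb T x) := by
  have hxtail : x ∈ closure (orb T ((T ^ M) x)) := five T x hno M hx
  have hmaps : Set.MapsTo (aeval T p : X →L[ℂ] X) (orb T ((T ^ M) x))
      (closure (orb T x)) := by
    rintro y ⟨l, hl, n, rfl⟩
    show (aeval T p : X →L[ℂ] X) (l • (T ^ n) ((T ^ M) x)) ∈ closure (orb T x)
    have h1 : (T ^ n) ((T ^ M) x) = (T ^ (n + M)) x := by
      rw [pow_add, ContinuousLinearMap.mul_apply]
    rw [map_smul, h1, aeval_pow_comm]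
    have h2 := hm (n + M) (Nat.le_add_left M n)
    simpa using smul_pow_closure T x hl 0 h2
  have h3 := map_mem_closure ((aeval T p : X →L[ℂ] X).continuous) hxtail hmaps
  rwa [closure_closure] at h3

lemma orbitW (hx : x ∈ interior (closure (orb T x)))
    (hno : ∀ j : ℕ, ¬ Dense ((ℂ ∙ ((T ^ j) x) : Submodule ℂ X) : Set X))
    (p : ℂ[X]) (hp : (aeval T p : X →L[ℂ] X) x ∉ closure (orb T x)) :
    ∀ m : ℕ, (T ^ m) ((aeval T p : X →L[ℂ] X) x) ∉ closure (orb T x) := by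
  intro m hmem
  apply hp
  refine star2 T x hx hno p m ?_
  intro j hj
  have h1 : (T ^ j) ((aeval T p : X →L[ℂ] X) x)
      = (T ^ (j - m)) ((T ^ m) ((aeval T p : X →L[ℂ] X) x)) := by
    rw [← ContinuousLinearMap.mul_apply (T ^ (j - m)) (T ^ m), ← pow_add]
    congr 2
    omega
  rw [h1]
  exact pow_mem_closure T x (j - m) hmem

lemma imageW (hx : x ∈ interior (closure (orb T x)))
    (hno : ∀ j : ℕ, ¬ Dense ((ℂ ∙ ((T ^ j) x) : Submodule ℂ X) : Set X))
    (p : ℂ[X]) (hp : (aeval T p : X →L[ℂ] X) x ∉ closure (orb T x)) :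
    ∀ f ∈ closure (orb T x), (aeval T p : X →L[ℂ] X) f ∈ closure ((closure (orb T x))ᶜ) := by
  intro f hf
  have hmaps : Set.MapsTo (aeval T p : X →L[ℂ] X) (orb T x) ((closure (orb T x))ᶜ) := by
    rintro y ⟨l, hl, n, rfl⟩
    show (aeval T p : X →L[ℂ] X) (l • (T ^ n) x) ∈ (closure (orb T x))ᶜ
    rw [map_smul, aeval_pow_comm]
    intro hmem
    have hl0 : l ≠ 0 := by
      intro h0; rw [h0] at hl; simp at hl
    have h2 := cstar T x hx l⁻¹ (inv_ne_zero hl0) _ hmem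
    rw [smul_smul, inv_mul_cancel₀ hl0, one_smul] at h2
    exact orbitW T x hx hno p hp n h2
  exact map_mem_closure ((aeval T p : X →L[ℂ] X).continuous) hf hmaps

end Chain


section Final

variable (T : X →L[ℂ] X) (x : X)

lemma linear_mem_F (hx : x ∈ interior (closure (orb T x)))
    (hno : ∀ j : ℕ, ¬ Dense ((ℂ ∙ ((T ^ j) x) : Submodule ℂ X) : Set X)) (β : ℂ) :
    T x - β • x ∈ closure (orb T x) := by
  set Λ : Set ℂ := {γ : ℂ | T x - γ • x ∈ closure (orb T x)} with hΛdef
  have hcont0 : Continuous fun γ : ℂ => T x - γ • x :=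
    continuous_const.sub (continuous_id.smul continuous_const)
  have hΛclosed : IsClosed Λ := IsClosed.preimage hcont0 isClosed_closure
  have hcont1 : Continuous fun s : ℂ => x - s • T x :=
    continuous_const.sub (continuous_id.smul continuous_const)
  have hnb : (fun s : ℂ => x - s • T x) ⁻¹' interior (closure (orb T x)) ∈ 𝓝 (0 : ℂ) := by
    apply hcont1.continuousAt.preimage_mem_nhds
    have : x - (0:ℂ) • T x = x := by simp
    rw [this]
    exact isOpen_interior.mem_nhds hx
  obtain ⟨ε, hε, hball⟩ := Metric.mem_nhds_iff.1 hnb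
  have hbig : ∀ γ : ℂ, 1/ε < ‖γ‖ → γ ∈ Λ := by
    intro γ hγ
    have hγ0 : γ ≠ 0 := by
      intro h0
      rw [h0] at hγ
      simp only [norm_zero] at hγ
      have : (0:ℝ) < 1/ε := by positivity
      linarith
    have habs : 0 < ‖γ‖ := norm_pos_iff.2 hγ0
    have hinv : ‖γ⁻¹‖ < ε := by
      rw [norm_inv]
      have h6 : (‖γ‖)⁻¹ < (1/ε)⁻¹ := by
        apply inv_strictAnti₀ (by positivity) hγ
      rwa [one_div, inv_inv] at h6
    have hmem : x - γ⁻¹ • T x ∈ interior (closure (orb T x)) := by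
      apply hball
      rw [Metric.mem_ball, dist_zero_right]
      exact hinv
    have h2 : (-γ) • (x - γ⁻¹ • T x) ∈ closure (orb T x) :=
      cstar T x hx (-γ) (neg_ne_zero.2 hγ0) _ (interior_subset hmem)
    have h3 : (-γ) • (x - γ⁻¹ • T x) = T x - γ • x := by
      rw [smul_sub, smul_smul]
      have : -γ * γ⁻¹ = -1 := by field_simp
      rw [this]
      simp only [neg_smul, one_smul, sub_neg_eq_add]
      abel
    rwa [h3] at h2
  by_contra hβ
  set Ω : Set ℂ := Λᶜ with hΩdef
  have hΩopen : IsOpen Ω := hΛclosed.isOpen_compl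
  have hβΩ : β ∈ Ω := hβ
  have hne : (frontier Ω).Nonempty := by
    by_contra hemp
    rw [Set.not_nonempty_iff_eq_empty] at hemp
    have hclopen : IsClopen Ω := isClopen_iff_frontier_eq_empty.mpr hemp
    haveI : PreconnectedSpace ℂ :=
      ⟨(convex_univ : Convex ℝ (Set.univ : Set ℂ)).isPreconnected⟩
    rcases isClopen_iff.1 hclopen with h' | h'
    · rw [h'] at hβΩ
      exact hβΩ
    · have hbigpt : ((1/ε + 1 : ℝ) : ℂ) ∈ Λ := by
        apply hbig
        rw [Complex.norm_real, Real.norm_eq_abs]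
        rw [abs_of_pos (by positivity)]
        linarith
      have : ((1/ε + 1 : ℝ) : ℂ) ∈ Ω := h' ▸ Set.mem_univ _
      exact this hbigpt
  obtain ⟨γs, hγs⟩ := hne
  rw [hΩopen.frontier_eq] at hγs
  obtain ⟨hγscl, hγsnot⟩ := hγs
  have hγΛ : γs ∈ Λ := by
    by_contra hh
    exact hγsnot hh
  have hB : ∀ f ∈ closure (orb T x), T f - γs • f ∈ closure ((closure (orb T x))ᶜ) := by
    intro f hf
    obtain ⟨seq, hseqΩ, hseqlim⟩ := mem_closure_iff_seq_limit.1 hγscl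
    have hterm : ∀ i, T f - seq i • f ∈ closure ((closure (orb T x))ᶜ) := by
      intro i
      have hWp : (aeval T (Polynomial.X - Polynomial.C (seq i)) : X →L[ℂ] X) x ∉
          closure (orb T x) := by
        rw [aeval_lin]
        exact hseqΩ i
      have h4 := imageW T x hx hno _ hWp f hf
      rwa [aeval_lin] at h4
    have hlim : Filter.Tendsto (fun i => T f - seq i • f) atTop (𝓝 (T f - γs • f)) :=
      tendsto_const_nhds.sub (hseqlim.smul_const f)
    exact isClosed_closure.mem_of_tendsto hlim (Filter.Eventually.of_forall hterm)
  have hxnot : x ∉ closure ((closure (orb T x))ᶜ) := by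
    intro hmem
    obtain ⟨y, hy1, hy2⟩ := mem_closure_iff.1 hmem (interior (closure (orb T x)))
      isOpen_interior hx
    exact hy2 (interior_subset hy1)
  have hdr := dense_sub_range T x ⟨x, hx⟩ γs
  have hx2 : x ∈ closure (Set.range fun y => T y - γs • y) := hdr x
  have hransub : (Set.range fun y => T y - γs • y) ⊆
      closure ((closure (orb T x))ᶜ) ∪
        (fun y => T y - γs • y) '' ((closure (orb T x))ᶜ) := by
    rintro - ⟨w, rfl⟩
    by_cases hw : w ∈ closure (orb T x)
    · exact Or.inl (hB w hw)
    · exact Or.inr ⟨w, hw, rfl⟩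
  have hx3 : x ∈ closure ((fun y => T y - γs • y) '' ((closure (orb T x))ᶜ)) := by
    have h4 : closure (Set.range fun y => T y - γs • y) ⊆
        closure ((closure (orb T x))ᶜ) ∪
          closure ((fun y => T y - γs • y) '' ((closure (orb T x))ᶜ)) := by
      have h5 := closure_mono hransub
      rwa [closure_union, closure_closure] at h5
    rcases h4 hx2 with h' | h'
    · exact absurd h' hxnot
    · exact h'
  obtain ⟨v, hv1, hv2⟩ := mem_closure_iff.1 hx3 (interior (closure (orb T x)))
    isOpen_interior hx
  obtain ⟨w, hwF, hwv⟩ := hv2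
  have hcont2 : Continuous fun y : X => T y - γs • y :=
    T.continuous.sub (continuous_const.smul continuous_id)
  have hO : IsOpen (((closure (orb T x))ᶜ : Set X) ∩
      (fun y : X => T y - γs • y) ⁻¹' interior (closure (orb T x))) :=
    (isClosed_closure.isOpen_compl).inter (hcont2.isOpen_preimage _ isOpen_interior)
  have hOne : (((closure (orb T x))ᶜ : Set X) ∩
      (fun y : X => T y - γs • y) ⁻¹' interior (closure (orb T x))).Nonempty :=
    ⟨w, hwF, by
      rw [Set.mem_preimage, show T w - γs • w = v from hwv]
      exact hv1⟩
  obtain ⟨v', hv'S, hv'O⟩ := (dense_poly_values T x ⟨x, hx⟩).exists_mem_open hO hOne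
  obtain ⟨p, rfl⟩ := hv'S
  have hpnotF : (aeval T p : X →L[ℂ] X) x ∉ closure (orb T x) := hv'O.1
  have hq : (aeval T (Polynomial.X - Polynomial.C γs) : X →L[ℂ] X) x ∈ closure (orb T x) := by
    rw [aeval_lin]
    exact hγΛ
  have himg := imageW T x hx hno p hpnotF _ hq
  have hcompute : (aeval T p : X →L[ℂ] X)
      ((aeval T (Polynomial.X - Polynomial.C γs) : X →L[ℂ] X) x)
      = T ((aeval T p : X →L[ℂ] X) x) - γs • ((aeval T p : X →L[ℂ] X) x) := by
    have h5 : (aeval T p : X →L[ℂ] X) * (aeval T (Polynomial.X - Polynomial.C γs)) =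
        (aeval T (Polynomial.X - Polynomial.C γs)) * (aeval T p : X →L[ℂ] X) := by
      rw [← map_mul, ← map_mul, mul_comm]
    calc (aeval T p : X →L[ℂ] X) ((aeval T (Polynomial.X - Polynomial.C γs) : X →L[ℂ] X) x)
        = ((aeval T p : X →L[ℂ] X) * (aeval T (Polynomial.X - Polynomial.C γs))) x := rfl
      _ = ((aeval T (Polynomial.X - Polynomial.C γs)) * (aeval T p : X →L[ℂ] X)) x := by
          rw [h5]
      _ = (aeval T (Polynomial.X - Polynomial.C γs) : X →L[ℂ] X)
            ((aeval T p : X →L[ℂ] X) x) := rfl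
      _ = _ := by rw [aeval_lin]
  rw [hcompute] at himg
  have hv'O2 : T ((aeval T p : X →L[ℂ] X) x) - γs • ((aeval T p : X →L[ℂ] X) x) ∈
      interior (closure (orb T x)) := hv'O.2
  obtain ⟨y, hy1, hy2⟩ := mem_closure_iff.1 himg (interior (closure (orb T x)))
    isOpen_interior hv'O2
  exact hy2 (interior_subset hy1)

lemma all_values (hx : x ∈ interior (closure (orb T x)))
    (hno : ∀ j : ℕ, ¬ Dense ((ℂ ∙ ((T ^ j) x) : Submodule ℂ X) : Set X)) :
    ∀ (d : ℕ) (p : ℂ[X]), p.natDegree ≤ d →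
      (aeval T p : X →L[ℂ] X) x ∈ closure (orb T x) := by
  intro d
  induction d with
  | zero =>
    intro p hp
    rw [Polynomial.eq_C_of_natDegree_le_zero hp, aeval_C_apply]
    by_cases hc : p.coeff 0 = 0
    · rw [hc, zero_smul]
      exact zero_mem_F T x hx
    · exact cstar T x hx _ hc _ (subset_closure (x_mem_orb T x))
  | succ d ih =>
    intro p hp
    by_cases hd : p.natDegree ≤ d
    · exact ih p hd
    have hdeg : p.natDegree = d + 1 := by omega
    have hppos : 0 < p.degree := by
      rw [← Polynomial.natDegree_pos_iff_degree_pos]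
      omega
    obtain ⟨β, hβ⟩ := Complex.exists_root hppos
    obtain ⟨q, hq⟩ := Polynomial.dvd_iff_isRoot.2 hβ
    have hq0 : q ≠ 0 := by
      intro h0
      rw [h0, mul_zero] at hq
      rw [hq] at hdeg
      simp at hdeg
    have hqdeg : q.natDegree ≤ d := by
      have hmul := Polynomial.natDegree_mul (Polynomial.X_sub_C_ne_zero β) hq0
      rw [← hq] at hmul
      rw [Polynomial.natDegree_X_sub_C] at hmul
      omega
    have hval : (aeval T p : X →L[ℂ] X) x
        = (aeval T (Polynomial.X - Polynomial.C β) : X →L[ℂ] X)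
            ((aeval T q : X →L[ℂ] X) x) := by
      rw [hq, map_mul]
      rfl
    rw [hval]
    refine rule4 T x _ ?_ _ (ih q hqdeg)
    rw [aeval_lin]
    exact linear_mem_F T x hx hno β

lemma core2 (hx : x ∈ interior (closure (orb T x)))
    (hno : ∀ j : ℕ, ¬ Dense ((ℂ ∙ ((T ^ j) x) : Submodule ℂ X) : Set X)) :
    Dense (orb T x) := by
  have hvals : {y : X | ∃ p : ℂ[X], y = (aeval T p : X →L[ℂ] X) x} ⊆ closure (orb T x) := by
    rintro y ⟨p, rfl⟩
    exact all_values T x hx hno p.natDegree p le_rfl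
  have hdense := dense_poly_values T x ⟨x, hx⟩
  have h2 := closure_mono hvals
  rw [hdense.closure_eq, closure_closure] at h2
  rw [dense_iff_closure_eq]
  exact Set.eq_univ_of_univ_subset h2

end Final


section Final2

variable (T : X →L[ℂ] X) (x : X)

lemma line_dense_case [T2Space X] (z : X)
    (hd : Dense ((ℂ ∙ z : Submodule ℂ X) : Set X))
    (h : (interior (closure (orb T x))).Nonempty) : Dense (orb T x) := by
  rcases subsingleton_or_nontrivial X with hX | hX
  · intro y
    have hyx : y = x := Subsingleton.elim y x
    rw [hyx]
    exact subset_closure (x_mem_orb T x)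
  · have hcl : IsClosed ((ℂ ∙ z : Submodule ℂ X) : Set X) :=
      Submodule.closed_of_finiteDimensional _
    have huniv : ((ℂ ∙ z : Submodule ℂ X) : Set X) = Set.univ := by
      rw [← hcl.closure_eq]
      exact hd.closure_eq
    have hmemspan : ∀ w : X, w ∈ (ℂ ∙ z : Submodule ℂ X) := by
      intro w
      have hw : w ∈ ((ℂ ∙ z : Submodule ℂ X) : Set X) := by rw [huniv]; trivial
      exact hw
    have hz : z ≠ 0 := by
      intro h0
      obtain ⟨a, b, hab⟩ := exists_pair_ne X
      apply hab
      have key : ∀ w : X, w = 0 := by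
        intro w
        have hw' := hmemspan w
        rw [h0, Submodule.span_zero_singleton] at hw'
        exact (Submodule.mem_bot ℂ).1 hw'
      rw [key a, key b]
    obtain ⟨μ, hμ⟩ := Submodule.mem_span_singleton.1 (hmemspan (T z))
    obtain ⟨c₀, hc₀⟩ := Submodule.mem_span_singleton.1 (hmemspan x)
    have hTn : ∀ n : ℕ, (T ^ n) x = (μ ^ n * c₀) • z := by
      intro n
      induction n with
      | zero => simp [← hc₀]
      | succ n ih =>
        have hstep : (T ^ (n+1)) x = T ((T ^ n) x) := by
          rw [pow_succ', ContinuousLinearMap.mul_apply]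
        rw [hstep, ih, map_smul, ← hμ, smul_smul]
        congr 1
        ring
    have horbform : ∀ a ∈ orb T x,
        ∃ l : ℂ, ‖l‖ = 1 ∧ ∃ n : ℕ, a = (l * μ ^ n * c₀) • z := by
      rintro a ⟨l, hl, n, rfl⟩
      refine ⟨l, hl, n, ?_⟩
      rw [hTn n, smul_smul]
      congr 1
      ring
    have hsub := subsingleton_of_line z μ c₀ (orb T x) horbform h
    exact absurd hsub (not_subsingleton X)

lemma coreT2 [T2Space X] (h : (interior (closure (orb T x))).Nonempty) :
    Dense (orb T x) := by
  by_cases hno : ∀ j : ℕ, ¬ Dense ((ℂ ∙ ((T ^ j) x) : Submodule ℂ X) : Set X)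
  swap
  · push_neg at hno
    obtain ⟨j, hj⟩ := hno
    exact line_dense_case T x ((T ^ j) x) hj h
  obtain ⟨u, hu⟩ := h
  have hU : ∃ y ∈ interior (closure (orb T x)), y ∈ orb T x := by
    obtain ⟨y, hy1, hy2⟩ := mem_closure_iff.1 (interior_subset hu) _ isOpen_interior hu
    exact ⟨y, hy1, hy2⟩
  obtain ⟨y, hyU, l₀, hl₀, n₀, rfl⟩ := hU
  have hl₀0 : l₀ ≠ 0 := by
    intro h0
    rw [h0] at hl₀
    simp at hl₀
  have hTn₀ : (T ^ n₀) x ∈ interior (closure (orb T x)) := by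
    have hinv : ‖l₀⁻¹‖ = 1 := by rw [norm_inv, hl₀]; norm_num
    have himg : (T ^ n₀) x ∈ l₀⁻¹ • interior (closure (orb T x)) := by
      have h1 : l₀⁻¹ • (l₀ • (T ^ n₀) x) ∈ l₀⁻¹ • interior (closure (orb T x)) :=
        Set.smul_mem_smul_set hyU
      rwa [smul_smul, inv_mul_cancel₀ hl₀0, one_smul] at h1
    have hsubs : l₀⁻¹ • interior (closure (orb T x)) ⊆ interior (closure (orb T x)) := by
      have hopen : IsOpen (l₀⁻¹ • interior (closure (orb T x))) :=
        (Homeomorph.smulOfNeZero l₀⁻¹ (inv_ne_zero hl₀0)).isOpenMap _ isOpen_interior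
      refine interior_maximal ?_ hopen
      rintro - ⟨v, hv, rfl⟩
      simpa using smul_pow_closure T x (l := l₀⁻¹) hinv 0 (interior_subset hv)
    exact hsubs himg
  have htail : interior (closure (orb T x)) ⊆ closure (orb T ((T ^ n₀) x)) :=
    five T x hno n₀
  have hx' : (T ^ n₀) x ∈ interior (closure (orb T ((T ^ n₀) x))) :=
    interior_maximal htail isOpen_interior hTn₀
  have hno' : ∀ j : ℕ, ¬ Dense ((ℂ ∙ ((T ^ j) ((T ^ n₀) x)) : Submodule ℂ X) : Set X) := by
    intro j
    have heq : (T ^ j) ((T ^ n₀) x) = (T ^ (j + n₀)) x := by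
      rw [pow_add, ContinuousLinearMap.mul_apply]
    rw [heq]
    exact hno (j + n₀)
  have hdense' := core2 T ((T ^ n₀) x) hx' hno'
  refine hdense'.mono ?_
  rintro w ⟨l, hl, n, rfl⟩
  refine ⟨l, hl, n + n₀, ?_⟩
  rw [pow_add, ContinuousLinearMap.mul_apply]

end Final2

theorem stmt4' (T : X →L[ℂ] X) (x : X)
    (h : (interior (closure (orb T x))).Nonempty) : Dense (orb T x) := by
  classical
  set N : Submodule ℂ X := (⊥ : Submodule ℂ X).topologicalClosure with hN
  haveI hNcl : IsClosed (N : Set X) := Submodule.isClosed_topologicalClosure _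
  have hNset : (N : Set X) = closure ({0} : Set X) := by
    rw [hN, Submodule.topologicalClosure_coe, Submodule.bot_coe]
  have hTN : N ≤ N.comap (T : X →ₗ[ℂ] X) := by
    intro v hv
    have hv' : v ∈ closure ({0} : Set X) := by rw [← hNset]; exact hv
    have h1 : T v ∈ closure (T '' ({0} : Set X)) :=
      map_mem_closure T.continuous hv' (Set.mapsTo_image _ _)
    have h2 : T '' ({0} : Set X) = ({0} : Set X) := by
      rw [Set.image_singleton, map_zero]
    rw [h2] at h1
    have hmem : T v ∈ (N : Set X) := by rw [hNset]; exact h1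
    exact hmem
  set π := N.mkQ with hπ
  have hπcont : Continuous π := continuous_quot_mk
  set Tb : (X ⧸ N) →ₗ[ℂ] (X ⧸ N) := N.mapQ N (T : X →ₗ[ℂ] X) hTN with hTb
  have hTbπ : ∀ v : X, Tb (π v) = π (T v) := by
    intro v
    rw [hπ, hTb, Submodule.mkQ_apply, Submodule.mkQ_apply]
    exact Submodule.mapQ_apply _ _ _ _
  have hTbcont : Continuous Tb := by
    rw [← (Submodule.isOpenQuotientMap_mkQ N).continuous_comp_iff]
    have heq : (⇑Tb ∘ ⇑N.mkQ) = (⇑N.mkQ ∘ fun v => T v) := funext fun v => hTbπ v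
    rw [heq]
    exact hπcont.comp T.continuous
  set TbL : (X ⧸ N) →L[ℂ] (X ⧸ N) := ⟨Tb, hTbcont⟩ with hTbL
  have hpow : ∀ (n : ℕ) (v : X), (TbL ^ n) (π v) = π ((T ^ n) v) := by
    intro n
    induction n with
    | zero => intro v; simp
    | succ n ih =>
      intro v
      have h1 : (TbL ^ (n+1)) (π v) = (TbL ^ n) (TbL (π v)) := by
        rw [pow_succ, ContinuousLinearMap.mul_apply]
      have h2 : TbL (π v) = π (T v) := hTbπ v
      have h3 : (T ^ (n+1)) v = (T ^ n) (T v) := by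
        rw [pow_succ, ContinuousLinearMap.mul_apply]
      rw [h1, h2, ih, h3]
  have horb : π '' orb T x = orb TbL (π x) := by
    ext q
    constructor
    · rintro ⟨y, ⟨l, hl, n, rfl⟩, rfl⟩
      exact ⟨l, hl, n, by rw [map_smul, ← hpow]⟩
    · rintro ⟨l, hl, n, rfl⟩
      exact ⟨l • (T ^ n) x, ⟨l, hl, n, rfl⟩, by rw [map_smul, hpow]⟩
  have hopen : IsOpenMap π := Submodule.isOpenMap_mkQ N
  have hint' : (interior (closure (orb TbL (π x)))).Nonempty := by
    obtain ⟨u, hu⟩ := h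
    have h1 : IsOpen (π '' interior (closure (orb T x))) := hopen _ isOpen_interior
    have h2 : π '' interior (closure (orb T x)) ⊆ closure (orb TbL (π x)) := by
      rw [← horb]
      calc π '' interior (closure (orb T x)) ⊆ π '' closure (orb T x) :=
            Set.image_mono interior_subset
        _ ⊆ closure (π '' orb T x) := image_closure_subset_closure_image hπcont
    exact ⟨π u, interior_maximal h2 h1 ⟨u, hu, rfl⟩⟩
  have hdQ : Dense (orb TbL (π x)) := coreT2 TbL (π x) hint'
  intro y
  rw [mem_closure_iff]
  intro O hO hyO
  have hπO : IsOpen (π '' O) := hopen O hO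
  obtain ⟨q, hq1, hq2⟩ := mem_closure_iff.1 (hdQ (π y)) (π '' O) hπO ⟨y, hyO, rfl⟩
  rw [← horb] at hq2
  obtain ⟨o, hoO, hoq⟩ := hq1
  obtain ⟨s, hsorb, hsq⟩ := hq2
  have hos : o - s ∈ N := by
    rw [← Submodule.Quotient.eq]
    show π o = π s
    rw [hoq, hsq]
  have h0 : o - s ∈ closure ({0} : Set X) := by rw [← hNset]; exact hos
  have h1 : o ∈ closure ({s} : Set X) := by
    have hcont2 : Continuous fun w : X => w + s := continuous_id.add continuous_const
    have h3 := map_mem_closure hcont2 h0 (t := ({s} : Set X)) ?_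
    · simpa using h3
    · intro w hw
      rw [Set.mem_singleton_iff] at hw
      subst hw
      simp
  have hoc : o ∈ closure (orb T x) :=
    closure_mono (Set.singleton_subset_iff.2 hsorb) h1
  obtain ⟨w', hw'O, hw'orb⟩ := mem_closure_iff.1 hoc O hO hoO
  exact ⟨w', hw'O, hw'orb⟩


end Stmt4Aux

/-- If the closure of `{λ T^n x : λ ∈ 𝕋, n ≥ 0}` has nonempty interior,
then `{λ T^n x : λ ∈ 𝕋, n ≥ 0}` is dense in `X`. -/
theorem stmt4 {X : Type*} [AddCommGroup X] [Module ℂ X] [TopologicalSpace X]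
    [IsTopologicalAddGroup X] [ContinuousSMul ℂ X] (T : X →L[ℂ] X) (x : X)
    (h : (interior (closure
      {y : X | ∃ l : ℂ, ‖l‖ = 1 ∧ ∃ n : ℕ, y = l • (T ^ n) x})).Nonempty) :
    Dense {y : X | ∃ l : ℂ, ‖l‖ = 1 ∧ ∃ n : ℕ, y = l • (T ^ n) x} := by
  exact Stmt4Aux.stmt4' T x h
end

section
/- Let G be an abelian topological group, let g, h ∈ G, let d ≥ 1 and m ≥ 1 be integers, and let (n_k) be a sequence of positive integers such that g^{n_k^j} → 1_G for every j with 1 ≤ j ≤ d−1 and g^{n_k^d} → h. Then g^{(n_k + m)^d} → h · g^{m^d}. -/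
open Filter Topology

/-- In an abelian topological group `G`, if `(n_k)` is a sequence of
positive integers with `g^{n_k^j} → 1` for `1 ≤ j ≤ d - 1` and `g^{n_k^d} → h`, then
`g^{(n_k + m)^d} → h * g^{m^d}`. -/
theorem stmt5 {G : Type*} [CommGroup G] [TopologicalSpace G] [IsTopologicalGroup G]
    (g h : G) (d m : ℕ) (hd : 1 ≤ d) (hm : 1 ≤ m)
    (n : ℕ → ℕ) (hn : ∀ k, 1 ≤ n k)
    (hconv : ∀ j : ℕ, 1 ≤ j → j ≤ d - 1 →
      Tendsto (fun k => g ^ (n k ^ j)) atTop (nhds (1 : G)))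
    (hlast : Tendsto (fun k => g ^ (n k ^ d)) atTop (nhds h)) :
    Tendsto (fun k => g ^ ((n k + m) ^ d)) atTop (nhds (h * g ^ (m ^ d))) := by
  set L : ℕ → G := fun j => if j = 0 then g ^ m ^ d else if j = d then h else 1 with hL
  have key : Tendsto (fun k => ∏ j ∈ Finset.range (d + 1),
      (g ^ n k ^ j) ^ (m ^ (d - j) * Nat.choose d j)) atTop
      (nhds (∏ j ∈ Finset.range (d + 1), L j)) := by
    apply tendsto_finset_prod
    intro j hj
    rw [Finset.mem_range] at hj
    rcases eq_or_ne j 0 with rfl | hj0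
    · simpa [hL] using (tendsto_const_nhds :
        Tendsto (fun _ : ℕ => (g ^ (1:ℕ)) ^ (m ^ (d - 0) * Nat.choose d 0)) atTop _)
    · rcases eq_or_ne j d with rfl | hjd
      · simpa [hL, hj0] using hlast
      · have h1 : 1 ≤ j := Nat.one_le_iff_ne_zero.mpr hj0
        have h2 : j ≤ d - 1 := by omega
        have := (hconv j h1 h2).pow (m ^ (d - j) * Nat.choose d j)
        simpa [hL, hj0, hjd] using this
  have prodL : (∏ j ∈ Finset.range (d + 1), L j) = g ^ m ^ d * h := by
    have hsub : ({0, d} : Finset ℕ) ⊆ Finset.range (d + 1) := by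
      intro x hx; simp only [Finset.mem_insert, Finset.mem_singleton] at hx
      rcases hx with rfl | rfl <;> simp [Finset.mem_range] <;> omega
    rw [← Finset.prod_subset hsub, Finset.prod_pair (by omega : (0:ℕ) ≠ d)]
    · simp [hL, if_neg (by omega : ¬ d = 0)]
    · intro x _ hx
      simp only [Finset.mem_insert, Finset.mem_singleton, not_or] at hx
      simp [hL, hx.1, hx.2]
  have eqfun : ∀ k, g ^ ((n k + m) ^ d) =
      ∏ j ∈ Finset.range (d + 1), (g ^ n k ^ j) ^ (m ^ (d - j) * Nat.choose d j) := by
    intro k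
    rw [add_pow (n k) m d, ← Finset.prod_pow_eq_pow_sum]
    refine Finset.prod_congr rfl fun j _ => ?_
    simp [Nat.cast_id, mul_assoc, pow_mul]
  rw [prodL] at key
  rw [mul_comm h (g ^ m ^ d)]
  simpa only [eqfun] using key
end

section
/- Let X be a complex topological vector space, T a continuous linear operator on X, and x, y ∈ X. If the interior of the closure of {λ T^n x : λ ∈ 𝕋, n ≥ 0} and the interior of the closure of {λ T^n y : λ ∈ 𝕋, n ≥ 0} have nonempty intersection, then these two interiors are equal. -/
open Filter Topology Set

set_option linter.unusedSectionVars false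


section aux

variable {X : Type*} [AddCommGroup X] [Module ℂ X] [TopologicalSpace X]
    [IsTopologicalAddGroup X] [ContinuousSMul ℂ X]

/-- If the closure of a circle `{l • v : |l| = 1}` has nonempty interior, then all points of `X`
are topologically inseparable. -/
lemma circle_aux_stmt6 (v : X)
    (h : (interior (closure {z : X | ∃ l : ℂ, ‖l‖ = 1 ∧ z = l • v})).Nonempty) :
    ∀ p q : X, Inseparable p q := by
  haveI : IsTopologicalAddGroup (SeparationQuotient X) := ⟨⟩
  set C : Set X := {z : X | ∃ l : ℂ, ‖l‖ = 1 ∧ z = l • v} with hC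
  set W := interior (closure C) with hW
  obtain ⟨w, hw⟩ := h
  set mk : X → SeparationQuotient X := SeparationQuotient.mk with hmk
  have hmkc : Continuous mk := SeparationQuotient.continuous_mk
  have hmkim : mk '' C = {z | ∃ l : ℂ, ‖l‖ = 1 ∧ z = l • mk v} := by
    ext z
    constructor
    · rintro ⟨u, ⟨l, hl, rfl⟩, rfl⟩
      exact ⟨l, hl, (SeparationQuotient.mk_smul l v).symm⟩
    · rintro ⟨l, hl, rfl⟩
      exact ⟨l • v, ⟨l, hl, rfl⟩, SeparationQuotient.mk_smul l v⟩
  set C' : Set (SeparationQuotient X) := {z | ∃ l : ℂ, ‖l‖ = 1 ∧ z = l • mk v}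
  have hC'comp : IsCompact C' := by
    have : C' = (fun l : ℂ => l • mk v) '' (Metric.sphere 0 1) := by
      ext z
      simp only [mem_image, Metric.mem_sphere, dist_zero_right,
        mem_setOf_eq]
      constructor
      · rintro ⟨l, hl, rfl⟩; exact ⟨l, hl, rfl⟩
      · rintro ⟨l, hl, rfl⟩; exact ⟨l, hl, rfl⟩
    rw [this]
    exact (isCompact_sphere 0 1).image (by fun_prop)
  have hC'closed : IsClosed C' := hC'comp.isClosed
  -- the image of W is an open nonempty subset of C'
  have hWopen : IsOpen (mk '' W) := SeparationQuotient.isOpenMap_mk W isOpen_interior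
  have hWsub : mk '' W ⊆ C' := by
    calc mk '' W ⊆ mk '' closure C := image_mono interior_subset
      _ ⊆ closure (mk '' C) := image_closure_subset_closure_image hmkc
      _ = closure C' := by rw [hmkim]
      _ = C' := hC'closed.closure_eq
  have hspan : Submodule.span ℂ {mk v} = ⊤ := by
    apply Submodule.eq_top_of_nonempty_interior'
    refine ⟨mk w, ?_⟩
    rw [mem_interior_iff_mem_nhds]
    apply Filter.mem_of_superset (hWopen.mem_nhds ⟨w, hw, rfl⟩)
    intro z hz
    obtain ⟨l, _, rfl⟩ := hWsub hz
    exact Submodule.smul_mem _ _ (Submodule.mem_span_singleton_self _)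
  by_cases hv : mk v = 0
  · -- the separation quotient is trivial
    rw [hv, Submodule.span_zero_singleton] at hspan
    have hsub : Subsingleton (SeparationQuotient X) := by
      constructor
      intro a b
      have ha : a ∈ (⊥ : Submodule ℂ (SeparationQuotient X)) := hspan ▸ Submodule.mem_top
      have hb : b ∈ (⊥ : Submodule ℂ (SeparationQuotient X)) := hspan ▸ Submodule.mem_top
      rw [Submodule.mem_bot] at ha hb
      rw [ha, hb]
    intro p q
    rw [← SeparationQuotient.mk_eq_mk]
    exact Subsingleton.elim _ _
  · exfalso
    set φ : ℂ →ₗ[ℂ] SeparationQuotient X := LinearMap.toSpanSingleton ℂ _ (mk v) with hφ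
    have hinj : Function.Injective φ := by
      intro a b hab
      have : (a - b) • mk v = 0 := by
        rw [sub_smul, sub_eq_zero]
        exact hab
      rcases smul_eq_zero.1 this with h' | h'
      · exact sub_eq_zero.1 h'
      · exact absurd h' hv
    have hsurj : Function.Surjective φ := by
      rw [← LinearMap.range_eq_top, ← LinearMap.span_singleton_eq_range]
      exact hspan
    set e : ℂ ≃ₗ[ℂ] SeparationQuotient X := LinearEquiv.ofBijective φ ⟨hinj, hsurj⟩ with he
    set ec : ℂ ≃L[ℂ] SeparationQuotient X := e.toContinuousLinearEquiv with hec
    set O : Set ℂ := ec ⁻¹' (mk '' W) with hO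
    have hOopen : IsOpen O := hWopen.preimage ec.continuous
    have hOne : (ec.symm (mk w)) ∈ O := by
      simp only [hO, mem_preimage, ContinuousLinearEquiv.apply_symm_apply]
      exact ⟨w, hw, rfl⟩
    have hOsub : O ⊆ {l : ℂ | ‖l‖ = 1} := by
      intro l hl
      obtain ⟨μ, hμ, hμl⟩ := hWsub hl
      have h1 : ec l = l • mk v := by
        simp [hec, he, hφ, LinearEquiv.coe_toContinuousLinearEquiv',
          LinearMap.toSpanSingleton_apply]
      have : φ l = φ μ := h1.symm.trans hμl
      have := hinj this
      rw [this]
      exact hμ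
    -- contradiction: open nonempty subset of the unit circle in ℂ
    set l := ec.symm (mk w) with hl
    have hlO := hOne
    have hlabs : ‖l‖ = 1 := hOsub hlO
    have hcont : Continuous (fun t : ℝ => (t : ℂ) * l) := by fun_prop
    have hmem : (fun t : ℝ => (t : ℂ) * l) ⁻¹' O ∈ 𝓝 (1 : ℝ) := by
      apply hcont.continuousAt.preimage_mem_nhds
      rw [show ((1 : ℝ) : ℂ) * l = l by simp]
      exact hOopen.mem_nhds hlO
    have hne : ((fun t : ℝ => (t : ℂ) * l) ⁻¹' O ∩ Ioi 1).Nonempty :=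
      Filter.nonempty_of_mem (f := 𝓝[Set.Ioi (1:ℝ)] 1)
        (Filter.inter_mem (mem_nhdsWithin_of_mem_nhds hmem) self_mem_nhdsWithin)
    obtain ⟨t, htO, ht⟩ := hne
    have : ‖(t : ℂ) * l‖ = 1 := hOsub htO
    rw [norm_mul, hlabs, mul_one, Complex.norm_real, Real.norm_eq_abs, abs_of_pos (by linarith [mem_Ioi.1 ht])]
      at this
    linarith [mem_Ioi.1 ht]

end aux


section aux2

variable {X : Type*} [AddCommGroup X] [Module ℂ X] [TopologicalSpace X]
    [IsTopologicalAddGroup X] [ContinuousSMul ℂ X]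

/-- A nonempty open set contained in a finite union of closed sets: one of them
has nonempty interior. -/
lemma finite_union_aux_stmt6 (s : Finset ℕ) (f : ℕ → Set X) (hf : ∀ i, IsClosed (f i))
    (G : Set X) (hG : IsOpen G) (hGne : G.Nonempty) (hsub : G ⊆ ⋃ i ∈ s, f i) :
    ∃ i ∈ s, (interior (f i)).Nonempty := by
  induction s using Finset.induction_on generalizing G with
  | empty => simp only [Finset.notMem_empty, iUnion_of_empty, iUnion_empty,
      subset_empty_iff] at hsub; exact absurd (hsub ▸ hGne) (by simp)
  | @insert a s ha ih =>
    by_cases h' : (G \ f a).Nonempty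
    · obtain ⟨i, hi, hint⟩ := ih (G \ f a) (hG.sdiff (hf a)) h' (by
        intro z hz
        have := hsub hz.1
        simp only [Finset.mem_insert, mem_iUnion, exists_prop] at this ⊢
        obtain ⟨i, hi | hi, hfi⟩ := this
        · exact absurd (hi ▸ hfi) hz.2
        · exact ⟨i, hi, hfi⟩)
      exact ⟨i, Finset.mem_insert_of_mem hi, hint⟩
    · refine ⟨a, Finset.mem_insert_self _ _, ?_⟩
      rw [not_nonempty_iff_eq_empty, diff_eq_empty] at h'
      exact hGne.mono (interior_maximal h' hG)

/-- Invariance of the closure of the scaled orbit. -/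
lemma invar_aux_stmt6 (T : X →L[ℂ] X) (y w : X)
    (hw : w ∈ closure {z : X | ∃ l : ℂ, ‖l‖ = 1 ∧ ∃ n : ℕ, z = l • (T ^ n) y})
    (l : ℂ) (hl : ‖l‖ = 1) (k : ℕ) :
    l • (T ^ k) w ∈ closure {z : X | ∃ l : ℂ, ‖l‖ = 1 ∧ ∃ n : ℕ, z = l • (T ^ n) y} := by
  set A := {z : X | ∃ l : ℂ, ‖l‖ = 1 ∧ ∃ n : ℕ, z = l • (T ^ n) y}
  have hg : Continuous fun z : X => l • (T ^ k) z := by fun_prop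
  have hmaps : MapsTo (fun z : X => l • (T ^ k) z) A A := by
    rintro _ ⟨μ, hμ, n, rfl⟩
    refine ⟨l * μ, by rw [norm_mul, hl, hμ, one_mul], k + n, ?_⟩
    simp only [map_smul, smul_smul, pow_add, ContinuousLinearMap.mul_apply]
  exact map_mem_closure (f := fun z : X => l • (T ^ k) z) hg hw hmaps

/-- One inclusion. -/
lemma incl_aux_stmt6 (T : X →L[ℂ] X) (x y : X)
    (h : (interior (closure
        {z : X | ∃ l : ℂ, ‖l‖ = 1 ∧ ∃ n : ℕ, z = l • (T ^ n) x}) ∩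
      interior (closure
        {z : X | ∃ l : ℂ, ‖l‖ = 1 ∧ ∃ n : ℕ, z = l • (T ^ n) y})).Nonempty) :
    interior (closure {z : X | ∃ l : ℂ, ‖l‖ = 1 ∧ ∃ n : ℕ, z = l • (T ^ n) x}) ⊆
      closure {z : X | ∃ l : ℂ, ‖l‖ = 1 ∧ ∃ n : ℕ, z = l • (T ^ n) y} := by
  set A : Set X := {z : X | ∃ l : ℂ, ‖l‖ = 1 ∧ ∃ n : ℕ, z = l • (T ^ n) x} with hA
  set B : Set X := {z : X | ∃ l : ℂ, ‖l‖ = 1 ∧ ∃ n : ℕ, z = l • (T ^ n) y} with hB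
  obtain ⟨p, hpA, hpB⟩ := h
  -- a point of A lies in the interior of closure B
  have hpclA : p ∈ closure A := interior_subset hpA
  have hmeet : (interior (closure B) ∩ A).Nonempty :=
    _root_.mem_closure_iff.1 hpclA _ isOpen_interior hpB
  obtain ⟨a, haV, l₀, hl₀, n₀, rfl⟩ := hmeet
  have hl₀ne : l₀ ≠ 0 := by
    intro h0; rw [h0] at hl₀; simp at hl₀
  have ha : l₀ • (T ^ n₀) x ∈ closure B := interior_subset haV
  -- all scaled orbit points from time n₀ on are in closure B
  have key : ∀ m, n₀ ≤ m → ∀ μ : ℂ, ‖μ‖ = 1 → μ • (T ^ m) x ∈ closure B := by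
    intro m hm μ hμ
    have h1 : μ • (T ^ m) x = (μ * l₀⁻¹) • (T ^ (m - n₀)) (l₀ • (T ^ n₀) x) := by
      rw [map_smul, smul_smul, ← ContinuousLinearMap.mul_apply, ← pow_add,
        Nat.sub_add_cancel hm, mul_assoc, inv_mul_cancel₀ hl₀ne, mul_one]
    rw [h1]
    exact invar_aux_stmt6 T y _ ha _ (by rw [norm_mul, hμ, norm_inv, hl₀, inv_one, mul_one]) _
  -- closure A is contained in the union of circles and closure B
  set f : ℕ → Set X := fun m => closure {z : X | ∃ l : ℂ, ‖l‖ = 1 ∧ z = l • (T ^ m) x}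
    with hf
  have hfclosed : ∀ m, IsClosed (f m) := fun m => isClosed_closure
  have hclA : closure A ⊆ (⋃ m ∈ Finset.range n₀, f m) ∪ closure B := by
    apply closure_minimal
    · rintro _ ⟨l, hl, n, rfl⟩
      by_cases hn : n₀ ≤ n
      · exact Or.inr (key n hn l hl)
      · left
        refine mem_iUnion₂.2 ⟨n, Finset.mem_range.2 (by omega), subset_closure ⟨l, hl, rfl⟩⟩
    · exact ((Set.Finite.isClosed_biUnion (Finset.range n₀).finite_toSet
        (fun m _ => hfclosed m)).union isClosed_closure)
  -- conclude
  intro u hu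
  by_contra hub
  set G := interior (closure A) \ closure B with hG
  have hGopen : IsOpen G := isOpen_interior.sdiff isClosed_closure
  have hGne : G.Nonempty := ⟨u, hu, hub⟩
  have hGsub : G ⊆ ⋃ m ∈ Finset.range n₀, f m := by
    intro z hz
    rcases hclA (interior_subset hz.1) with h' | h'
    · exact h'
    · exact absurd h' hz.2
  obtain ⟨m, _, hint⟩ := finite_union_aux_stmt6 _ f hfclosed G hGopen hGne hGsub
  -- a circle closure has nonempty interior: all points are inseparable
  have hins := circle_aux_stmt6 ((T ^ m) x) hint
  have hyB : y ∈ B := ⟨1, by simp, 0, by simp⟩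
  exact hub ((hins y u).specializes.mem_closed isClosed_closure (subset_closure hyB))

end aux2

/-- If the interiors of the closures of `{λ T^n x : λ ∈ 𝕋, n ≥ 0}` and
`{λ T^n y : λ ∈ 𝕋, n ≥ 0}` intersect, then they are equal. -/
theorem stmt6 {X : Type*} [AddCommGroup X] [Module ℂ X] [TopologicalSpace X]
    [IsTopologicalAddGroup X] [ContinuousSMul ℂ X] (T : X →L[ℂ] X) (x y : X)
    (h : (interior (closure
        {z : X | ∃ l : ℂ, ‖l‖ = 1 ∧ ∃ n : ℕ, z = l • (T ^ n) x}) ∩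
      interior (closure
        {z : X | ∃ l : ℂ, ‖l‖ = 1 ∧ ∃ n : ℕ, z = l • (T ^ n) y})).Nonempty) :
    interior (closure
        {z : X | ∃ l : ℂ, ‖l‖ = 1 ∧ ∃ n : ℕ, z = l • (T ^ n) x}) =
      interior (closure
        {z : X | ∃ l : ℂ, ‖l‖ = 1 ∧ ∃ n : ℕ, z = l • (T ^ n) y}) := by
  have h' := h
  rw [Set.inter_comm] at h'
  apply Set.Subset.antisymm
  · exact interior_maximal (incl_aux_stmt6 T x y h) isOpen_interior
  · exact interior_maximal (incl_aux_stmt6 T y x h') isOpen_interior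
end

section
/- Let X be a complex topological vector space, T a continuous linear operator on X, and x ∈ X. Then for every nonzero complex number μ, the interior of the closure of {λ T^n x : λ ∈ 𝕋, n ≥ 0} equals the interior of the closure of {λ T^n (μ x) : λ ∈ 𝕋, n ≥ 0}. -/
open Filter Topology Set
open scoped Pointwise

namespace Stmt7Aux

section Helpers

variable {α : Type*} [TopologicalSpace α]

lemma interior_union_eq_empty {s t : Set α} (hs : IsClosed s) (hsi : interior s = ∅)
    (hti : interior t = ∅) : interior (s ∪ t) = ∅ := by
  rw [eq_empty_iff_forall_notMem]
  intro p hp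
  by_cases hsub : interior (s ∪ t) \ s = ∅
  · have h1 : interior (s ∪ t) ⊆ s := diff_eq_empty.1 hsub
    have h2 : interior (s ∪ t) ⊆ interior s := interior_maximal h1 isOpen_interior
    rw [hsi] at h2
    exact h2 hp
  · obtain ⟨y, hy⟩ := nonempty_iff_ne_empty.2 hsub
    have hop : IsOpen (interior (s ∪ t) \ s) := isOpen_interior.sdiff hs
    have hsubt : interior (s ∪ t) \ s ⊆ t := fun z hz =>
      (interior_subset hz.1).resolve_left hz.2
    have h3 : y ∈ interior t := interior_maximal hsubt hop hy
    rw [hti] at h3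
    exact h3

end Helpers

section TVS

variable {X : Type*} [AddCommGroup X] [Module ℂ X] [TopologicalSpace X]
    [IsTopologicalAddGroup X] [ContinuousSMul ℂ X]

/-- The circle orbit `𝕋 • w` of a single vector. -/
def circleSet (w : X) : Set X := {z : X | ∃ l : ℂ, ‖l‖ = 1 ∧ z = l • w}

lemma closure_eq_univ_of_dense_zero (hN : closure ({0} : Set X) = univ)
    {s : Set X} (hs : s.Nonempty) : closure s = univ := by
  obtain ⟨a, ha⟩ := hs
  have h2 := (Homeomorph.addLeft a).image_closure ({0} : Set X)
  rw [hN] at h2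
  have h3 : (Homeomorph.addLeft a) '' (univ : Set X) = univ := by
    rw [Set.image_univ]
    exact (Homeomorph.addLeft a).surjective.range_eq
  have h4 : (Homeomorph.addLeft a) '' ({0} : Set X) = {a} := by
    simp
  rw [h3, h4] at h2
  have h5 : closure ({a} : Set X) ⊆ closure s := closure_mono (singleton_subset_iff.2 ha)
  rw [← h2] at h5
  exact eq_univ_of_univ_subset h5

/-- In a Hausdorff nontrivial TVS, the closure of a circle orbit has empty interior. -/
lemma circle_small_t2 {Y : Type*} [AddCommGroup Y] [Module ℂ Y] [TopologicalSpace Y]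
    [IsTopologicalAddGroup Y] [ContinuousSMul ℂ Y] [T2Space Y] [Nontrivial Y] (w : Y) :
    interior (closure (circleSet w)) = ∅ := by
  haveI : NeBot (𝓝[{ x : ℂ | IsUnit x }] (0 : ℂ)) := NormedField.nhdsWithin_isUnit_neBot
  rw [eq_empty_iff_forall_notMem]
  intro p hp
  have hsub : circleSet w ⊆ (Submodule.span ℂ {w} : Set Y) := by
    rintro z ⟨l, -, rfl⟩
    exact Submodule.smul_mem _ _ (Submodule.mem_span_singleton_self w)
  have hcl : IsClosed ((Submodule.span ℂ {w} : Submodule ℂ Y) : Set Y) :=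
    Submodule.closed_of_finiteDimensional _
  have htop : Submodule.span ℂ {w} = ⊤ :=
    Submodule.eq_top_of_nonempty_interior' _
      ⟨p, interior_mono (closure_minimal hsub hcl) hp⟩
  have hw : w ≠ 0 := by
    rintro rfl
    rw [Submodule.span_zero_singleton] at htop
    have hall : ∀ y : Y, y = 0 := by
      intro y
      have : y ∈ (⊥ : Submodule ℂ Y) := htop ▸ Submodule.mem_top
      simpa using this
    obtain ⟨y₁, y₂, hne⟩ := exists_pair_ne Y
    exact hne (by rw [hall y₁, hall y₂])
  let e : ℂ ≃ₗ[ℂ] Y :=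
    (LinearEquiv.toSpanNonzeroSingleton ℂ Y w hw).trans (LinearEquiv.ofTop _ htop)
  have he : ∀ c : ℂ, e c = c • w := by
    intro c
    simp [e, LinearEquiv.trans_apply]
  let ce := e.toContinuousLinearEquiv
  have hce : ∀ c : ℂ, ce c = c • w := he
  have himg : circleSet w = ⇑ce '' (Metric.sphere (0 : ℂ) 1) := by
    ext z
    constructor
    · rintro ⟨l, hl, rfl⟩
      refine ⟨l, ?_, hce l⟩
      simp [hl]
    · rintro ⟨l, hl, rfl⟩
      refine ⟨l, ?_, (hce l).symm⟩
      simpa using hl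
  have hclosed : IsClosed (circleSet w) := by
    rw [himg]
    exact (ce.toHomeomorph.isClosed_image).2 Metric.isClosed_sphere
  have himage : interior (⇑ce '' (Metric.sphere (0 : ℂ) 1))
      = ⇑ce '' interior (Metric.sphere (0 : ℂ) 1) := by
    have h := ce.toHomeomorph.image_interior (Metric.sphere (0 : ℂ) 1)
    simpa using h.symm
  rw [hclosed.closure_eq, himg, himage,
    interior_sphere (0 : ℂ) one_ne_zero, image_empty] at hp
  exact hp

/-- In any TVS in which `{0}` is not dense, the closure of a circle orbit has empty
interior. Proved by passing to the separation quotient. -/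
lemma circle_small (hN : closure ({0} : Set X) ≠ univ) (w : X) :
    interior (closure (circleSet w)) = ∅ := by
  haveI : IsTopologicalAddGroup (SeparationQuotient X) :=
    { toContinuousAdd := inferInstance, toContinuousNeg := inferInstance }
  set q : X → SeparationQuotient X := SeparationQuotient.mk with hq
  have hsat : ∀ s : Set X, q ⁻¹' (closure (q '' s)) = closure s := by
    intro s
    rw [hq, SeparationQuotient.preimage_mk_closure]
    apply Subset.antisymm
    · have h1 : SeparationQuotient.mk ⁻¹' (SeparationQuotient.mk '' s) ⊆ closure s := by
        rintro u ⟨y, hy, hqy⟩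
        have hins : Inseparable y u := SeparationQuotient.mk_eq_mk.1 hqy
        exact (hins.mem_closed_iff isClosed_closure).1 (subset_closure hy)
      calc closure (SeparationQuotient.mk ⁻¹' (SeparationQuotient.mk '' s))
          ⊆ closure (closure s) := closure_mono h1
        _ = closure s := closure_closure
    · exact closure_mono (subset_preimage_image _ _)
  haveI : Nontrivial (SeparationQuotient X) := by
    rcases subsingleton_or_nontrivial (SeparationQuotient X) with hsub | h
    · exfalso
      apply hN
      have huniv : closure (q '' ({0} : Set X)) = univ := by
        apply eq_univ_of_forall
        intro y
        have hy : y = q 0 := Subsingleton.elim _ _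
        exact hy ▸ subset_closure ⟨0, rfl, rfl⟩
      calc closure ({0} : Set X) = q ⁻¹' (closure (q '' ({0} : Set X))) := (hsat _).symm
        _ = q ⁻¹' univ := by rw [huniv]
        _ = univ := preimage_univ
    · exact h
  have himg : q '' circleSet w = circleSet (q w) := by
    ext z
    constructor
    · rintro ⟨z', ⟨l, hl, rfl⟩, rfl⟩
      exact ⟨l, hl, rfl⟩
    · rintro ⟨l, hl, rfl⟩
      exact ⟨l • w, ⟨l, hl, rfl⟩, rfl⟩
  have key : interior (closure (circleSet (q w))) = ∅ := circle_small_t2 (q w)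
  calc interior (closure (circleSet w))
      = interior (q ⁻¹' (closure (q '' circleSet w))) := by rw [hsat]
    _ = q ⁻¹' (interior (closure (q '' circleSet w))) :=
        SeparationQuotient.preimage_mk_interior.symm
    _ = q ⁻¹' (interior (closure (circleSet (q w)))) := by rw [himg]
    _ = ∅ := by rw [key, preimage_empty]

variable (T : X →L[ℂ] X) (x : X)

/-- The set `{λ T^n x : |λ| = 1, n ≥ 0}`. -/
def orbitSet : Set X := {z : X | ∃ l : ℂ, ‖l‖ = 1 ∧ ∃ n : ℕ, z = l • (T ^ n) x}

/-- The tail `{λ T^m x : |λ| = 1, m ≥ n₀}`. -/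
def tailSet (n₀ : ℕ) : Set X :=
  {z : X | ∃ l : ℂ, ‖l‖ = 1 ∧ ∃ m : ℕ, n₀ ≤ m ∧ z = l • (T ^ m) x}

lemma pow_apply_mem_closure {a : X} (j : ℕ) (ha : a ∈ closure (orbitSet T x)) :
    (T ^ j) a ∈ closure (orbitSet T x) := by
  have hS : ∀ z ∈ orbitSet T x, (T ^ j) z ∈ orbitSet T x := by
    rintro z ⟨l, hl, n, rfl⟩
    refine ⟨l, hl, j + n, ?_⟩
    rw [map_smul]
    congr 1
    rw [pow_add, ContinuousLinearMap.mul_apply]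
  have hc : Continuous (⇑(T ^ j) : X → X) := (T ^ j).continuous
  have h1 : (T ^ j) a ∈ closure ((⇑(T ^ j) : X → X) '' orbitSet T x) :=
    image_closure_subset_closure_image hc (mem_image_of_mem _ ha)
  have h2 : (⇑(T ^ j) : X → X) '' orbitSet T x ⊆ orbitSet T x := by
    rintro _ ⟨z, hz, rfl⟩
    exact hS z hz
  exact closure_mono h2 h1

lemma rot_closure {ω : ℂ} (hω : ‖ω‖ = 1) :
    ω • closure (orbitSet T x) = closure (orbitSet T x) := by
  have hω0 : ω ≠ 0 := by
    intro h
    rw [h] at hω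
    simp at hω
  have hSS : ω • orbitSet T x = orbitSet T x := by
    apply Subset.antisymm
    · rintro _ ⟨z, ⟨l, hl, n, rfl⟩, rfl⟩
      refine ⟨ω * l, by rw [norm_mul, hω, hl, one_mul], n, ?_⟩
      show ω • l • (T ^ n) x = (ω * l) • (T ^ n) x
      rw [smul_smul]
    · rintro z ⟨l, hl, n, rfl⟩
      refine ⟨(ω⁻¹ * l) • (T ^ n) x, ⟨ω⁻¹ * l, ?_, n, rfl⟩, ?_⟩
      · rw [norm_mul, norm_inv, hω, hl]; norm_num
      · show ω • (ω⁻¹ * l) • (T ^ n) x = l • (T ^ n) x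
        rw [smul_smul, ← mul_assoc, mul_inv_cancel₀ hω0, one_mul]
  rw [← closure_smul₀' hω0, hSS]

lemma rot_interior {ω : ℂ} (hω : ‖ω‖ = 1) :
    ω • interior (closure (orbitSet T x)) = interior (closure (orbitSet T x)) := by
  have hω0 : ω ≠ 0 := by
    intro h
    rw [h] at hω
    simp at hω
  rw [← interior_smul₀ hω0, rot_closure T x hω]

/-- Density of the tail orbit inside the interior of the orbit closure. -/
lemma dens (hN : closure ({0} : Set X) ≠ univ) (n₀ : ℕ) :
    interior (closure (orbitSet T x)) ⊆
      closure (tailSet T x n₀ ∩ interior (closure (orbitSet T x))) := by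
  classical
  have hFint : ∀ s : Finset ℕ,
      IsClosed (⋃ j ∈ s, closure (circleSet ((T ^ j) x))) ∧
        interior (⋃ j ∈ s, closure (circleSet ((T ^ j) x))) = ∅ := by
    intro s
    induction s using Finset.induction_on with
    | empty => simp
    | insert j s hj ih =>
      rw [Finset.set_biUnion_insert]
      refine ⟨isClosed_closure.union ih.1, ?_⟩
      exact interior_union_eq_empty isClosed_closure (circle_small hN _) ih.2
  set F : Set X := ⋃ j ∈ Finset.range n₀, closure (circleSet ((T ^ j) x)) with hF
  have hFclosed : IsClosed F := (hFint (Finset.range n₀)).1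
  have hFempty : interior F = ∅ := (hFint (Finset.range n₀)).2
  have hsplit : closure (orbitSet T x) ⊆ closure (tailSet T x n₀) ∪ F := by
    have h1 : orbitSet T x ⊆
        tailSet T x n₀ ∪ ⋃ j ∈ Finset.range n₀, circleSet ((T ^ j) x) := by
      rintro z ⟨l, hl, n, rfl⟩
      rcases le_or_gt n₀ n with h | h
      · exact Or.inl ⟨l, hl, n, h, rfl⟩
      · exact Or.inr (mem_biUnion (Finset.mem_range.2 h) ⟨l, hl, rfl⟩)
    have h2 : (⋃ j ∈ Finset.range n₀, circleSet ((T ^ j) x)) ⊆ F :=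
      iUnion₂_mono fun j _ => subset_closure
    calc closure (orbitSet T x)
        ⊆ closure (tailSet T x n₀ ∪ ⋃ j ∈ Finset.range n₀, circleSet ((T ^ j) x)) :=
          closure_mono h1
      _ = closure (tailSet T x n₀) ∪
            closure (⋃ j ∈ Finset.range n₀, circleSet ((T ^ j) x)) := closure_union
      _ ⊆ closure (tailSet T x n₀) ∪ F :=
          union_subset_union_right _ (closure_minimal h2 hFclosed)
  intro u hu
  rw [mem_closure_iff]
  intro O hO huO
  have hO' : IsOpen ((O ∩ interior (closure (orbitSet T x))) \ F) :=
    (hO.inter isOpen_interior).sdiff hFclosed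
  have hne : ((O ∩ interior (closure (orbitSet T x))) \ F).Nonempty := by
    by_contra h
    rw [not_nonempty_iff_eq_empty, diff_eq_empty] at h
    have h3 : O ∩ interior (closure (orbitSet T x)) ⊆ interior F :=
      interior_maximal h (hO.inter isOpen_interior)
    rw [hFempty] at h3
    exact h3 ⟨huO, hu⟩
  obtain ⟨p, hp⟩ := hne
  have hpt : p ∈ closure (tailSet T x n₀) := by
    rcases hsplit (interior_subset hp.1.2) with h | h
    · exact h
    · exact absurd h hp.2
  rw [mem_closure_iff] at hpt
  obtain ⟨q', hq'⟩ := hpt _ hO' hp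
  exact ⟨q', hq'.1.1.1, hq'.2, hq'.1.1.2⟩

/-- An "annulus" of scalars around the unit circle carries an orbit point inside `U`. -/
lemma annulus {n₀ : ℕ} (hz : (T ^ n₀) x ∈ interior (closure (orbitSet T x))) :
    ∃ ε : ℝ, 0 < ε ∧ ε < 1 ∧ ∀ b : ℂ, ‖b‖ ∈ Set.Icc (1 - ε) (1 + ε) →
      b • (T ^ n₀) x ∈ interior (closure (orbitSet T x)) := by
  have hc : Continuous fun c : ℂ => c • (T ^ n₀) x := continuous_id.smul continuous_const
  have h1 : (1 : ℂ) ∈ (fun c : ℂ => c • (T ^ n₀) x) ⁻¹' interior (closure (orbitSet T x)) := by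
    simpa using hz
  obtain ⟨δ, hδ, hball⟩ := Metric.isOpen_iff.1 (isOpen_interior.preimage hc) 1 h1
  refine ⟨min (δ / 2) (1 / 2), by positivity,
    lt_of_le_of_lt (min_le_right _ _) (by norm_num), ?_⟩
  set ε := min (δ / 2) (1 / 2) with hε
  have hε1 : ε ≤ 1 / 2 := min_le_right _ _
  have hεδ : ε ≤ δ / 2 := min_le_left _ _
  intro b hb
  have hb0 : 0 < ‖b‖ := by
    have : (0 : ℝ) < 1 - ε := by linarith
    linarith [hb.1]
  have ht : ((‖b‖ : ℝ) : ℂ) • (T ^ n₀) x ∈ interior (closure (orbitSet T x)) := by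
    apply hball
    rw [Metric.mem_ball, Complex.dist_eq]
    have habs : ‖((‖b‖ : ℝ) : ℂ) - 1‖ = |‖b‖ - 1| := by
      rw [← Complex.ofReal_one, ← Complex.ofReal_sub, Complex.norm_real, Real.norm_eq_abs]
    rw [habs]
    have h2 : |‖b‖ - 1| ≤ ε := abs_le.2 ⟨by linarith [hb.1], by linarith [hb.2]⟩
    linarith
  have hrot : ‖b / ((‖b‖ : ℝ) : ℂ)‖ = 1 := by
    rw [norm_div, Complex.norm_real, Real.norm_eq_abs, abs_of_pos hb0, div_self hb0.ne']
  have hmem := smul_mem_smul_set (a := b / ((‖b‖ : ℝ) : ℂ)) ht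
  rw [rot_interior T x hrot] at hmem
  rwa [smul_smul, div_mul_cancel₀ b (by exact_mod_cast hb0.ne')] at hmem

/-- The key induction: scalars of modulus in `[(1-ε)^k, (1+ε)^k]` times tail orbit points
stay in the closure of the orbit. -/
lemma key_induction (hN : closure ({0} : Set X) ≠ univ) {n₀ : ℕ}
    {ε : ℝ} (hε0 : 0 < ε) (hε1 : ε < 1)
    (hann : ∀ b : ℂ, ‖b‖ ∈ Set.Icc (1 - ε) (1 + ε) →
      b • (T ^ n₀) x ∈ interior (closure (orbitSet T x))) :
    ∀ k : ℕ, ∀ c : ℂ, ‖c‖ ∈ Set.Icc ((1 - ε) ^ k) ((1 + ε) ^ k) →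
      ∀ m : ℕ, n₀ ≤ m → c • (T ^ m) x ∈ closure (orbitSet T x) := by
  set a : ℝ := 1 - ε with hadef
  set b : ℝ := 1 + ε with hbdef
  have ha0 : 0 < a := by rw [hadef]; linarith
  have hab : a ≤ b := by rw [hadef, hbdef]; linarith
  have hb1 : 1 ≤ b := by rw [hbdef]; linarith
  have ha1 : a ≤ 1 := by rw [hadef]; linarith
  intro k
  induction k with
  | zero =>
    intro c hc m _
    rw [pow_zero, pow_zero] at hc
    have hc1 : ‖c‖ = 1 := le_antisymm hc.2 hc.1
    exact subset_closure ⟨c, hc1, m, rfl⟩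
  | succ k ih =>
    intro c hc m hm
    have hu0 : 0 < ‖c‖ := lt_of_lt_of_le (pow_pos ha0 (k + 1)) hc.1
    set u := ‖c‖ with hudef
    set t := max (a ^ k) (min (b ^ k) u) with htdef
    have hakbk : a ^ k ≤ b ^ k := pow_le_pow_left₀ ha0.le hab k
    have htk : a ^ k ≤ t := le_max_left _ _
    have htk' : t ≤ b ^ k := max_le hakbk (min_le_left _ _)
    have ht0 : 0 < t := lt_of_lt_of_le (pow_pos ha0 k) htk
    have hs1 : a * t ≤ u := by
      rcases le_total u (a ^ k) with h | h
      · have hmin : min (b ^ k) u = u := min_eq_right (h.trans hakbk)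
        have htu : t = a ^ k := by
          rw [htdef, hmin, max_eq_left h]
        calc a * t = a ^ (k + 1) := by rw [htu, pow_succ, mul_comm]
          _ ≤ u := hc.1
      · have htu : t ≤ u := max_le h (min_le_right _ _)
        calc a * t ≤ 1 * t := mul_le_mul_of_nonneg_right ha1 ht0.le
          _ = t := one_mul t
          _ ≤ u := htu
    have hs2 : u ≤ b * t := by
      rcases le_total (b ^ k) u with h | h
      · have hmin : min (b ^ k) u = b ^ k := min_eq_left h
        have htu : t = b ^ k := by
          rw [htdef, hmin, max_eq_right hakbk]
        calc u ≤ b ^ (k + 1) := hc.2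
          _ = b * t := by rw [htu, pow_succ, mul_comm]
      · have htu : u ≤ t := by
          have hmin : min (b ^ k) u = u := min_eq_right h
          rw [htdef, hmin]
          exact le_max_right _ _
        calc u ≤ t := htu
          _ = 1 * t := (one_mul t).symm
          _ ≤ b * t := mul_le_mul_of_nonneg_right hb1 ht0.le
    have hτ0 : ((t : ℝ) : ℂ) ≠ 0 := by exact_mod_cast ht0.ne'
    set b₁ : ℂ := c / ((t : ℝ) : ℂ) with hb₁def
    have hb₁ : ‖b₁‖ ∈ Set.Icc a b := by
      rw [hb₁def, norm_div, Complex.norm_real, Real.norm_eq_abs, abs_of_pos ht0]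
      constructor
      · rw [le_div_iff₀ ht0]
        exact hs1
      · rw [div_le_iff₀ ht0]
        exact hs2
    have h1 : b₁ • (T ^ n₀) x ∈ interior (closure (orbitSet T x)) := hann b₁ hb₁
    have h2 : b₁ • (T ^ n₀) x ∈
        closure (tailSet T x n₀ ∩ interior (closure (orbitSet T x))) := dens T x hN n₀ h1
    have h3 : ((t : ℝ) : ℂ) • (tailSet T x n₀ ∩ interior (closure (orbitSet T x))) ⊆
        closure (orbitSet T x) := by
      rintro _ ⟨w, ⟨⟨l, hl, m', hm', rfl⟩, -⟩, rfl⟩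
      have hmem := ih (((t : ℝ) : ℂ) * l)
        (by rw [norm_mul, hl, mul_one, Complex.norm_real, Real.norm_eq_abs, abs_of_pos ht0]; exact ⟨htk, htk'⟩)
        m' hm'
      rwa [← smul_smul] at hmem
    have h4 : ((t : ℝ) : ℂ) • (b₁ • (T ^ n₀) x) ∈ closure (orbitSet T x) := by
      have hmem := smul_mem_smul_set (a := ((t : ℝ) : ℂ)) h2
      rw [← closure_smul₀' hτ0] at hmem
      exact ((closure_mono h3).trans closure_closure.subset) hmem
    have hscal : ((t : ℝ) : ℂ) * b₁ = c := by
      rw [hb₁def]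
      field_simp
    have h5 : ((t : ℝ) : ℂ) • (b₁ • (T ^ n₀) x) = c • (T ^ n₀) x := by
      rw [smul_smul, hscal]
    rw [h5] at h4
    have h6 := pow_apply_mem_closure T x (m - n₀) h4
    rw [map_smul] at h6
    have h7 : (T ^ (m - n₀)) ((T ^ n₀) x) = (T ^ m) x := by
      rw [← ContinuousLinearMap.mul_apply, ← pow_add, Nat.sub_add_cancel hm]
    rwa [h7] at h6

/-- Main lemma: scaling by a nonzero scalar maps the interior of the orbit closure
into itself. -/
lemma main_smul (ν : ℂ) (hν : ν ≠ 0) :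
    ν • interior (closure (orbitSet T x)) ⊆ interior (closure (orbitSet T x)) := by
  by_cases hN : closure ({0} : Set X) = univ
  · have huniv : closure (orbitSet T x) = univ :=
      closure_eq_univ_of_dense_zero hN ⟨x, 1, by simp, 0, by simp⟩
    rw [huniv, interior_univ]
    exact fun z _ => trivial
  rcases eq_empty_or_nonempty (interior (closure (orbitSet T x))) with hU | ⟨u₀, hu₀⟩
  · rw [hU]
    simp
  have h2 := dens T x hN 0 hu₀
  rw [mem_closure_iff] at h2
  obtain ⟨w, hw⟩ := h2 _ isOpen_interior hu₀
  obtain ⟨⟨l, hl, n₀, -, rfl⟩, hwU⟩ := hw.2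
  have hl0 : l ≠ 0 := by
    intro h
    rw [h] at hl
    simp at hl
  have hlinv : ‖l⁻¹‖ = 1 := by rw [norm_inv, hl]; norm_num
  have hz : (T ^ n₀) x ∈ interior (closure (orbitSet T x)) := by
    have hmem := smul_mem_smul_set (a := l⁻¹) hwU
    rw [rot_interior T x hlinv] at hmem
    rwa [smul_smul, inv_mul_cancel₀ hl0, one_smul] at hmem
  obtain ⟨ε, hε0, hε1, hann⟩ := annulus T x hz
  have hν0 : 0 < ‖ν‖ := norm_pos_iff.2 hν
  obtain ⟨k₁, hk₁⟩ := exists_pow_lt_of_lt_one hν0 (show 1 - ε < 1 by linarith)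
  obtain ⟨k₂, hk₂⟩ := pow_unbounded_of_one_lt (‖ν‖)
    (show (1 : ℝ) < 1 + ε by linarith)
  set k := max k₁ k₂ with hk
  have hlow : (1 - ε) ^ k ≤ ‖ν‖ := by
    calc (1 - ε) ^ k ≤ (1 - ε) ^ k₁ :=
          pow_le_pow_of_le_one (by linarith) (by linarith) (le_max_left _ _)
      _ ≤ ‖ν‖ := hk₁.le
  have hhigh : ‖ν‖ ≤ (1 + ε) ^ k := by
    calc ‖ν‖ ≤ (1 + ε) ^ k₂ := hk₂.le
      _ ≤ (1 + ε) ^ k := pow_le_pow_right₀ (by linarith) (le_max_right _ _)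
  have hsub : ν • interior (closure (orbitSet T x)) ⊆ closure (orbitSet T x) := by
    rintro _ ⟨u, hu, rfl⟩
    have h3 : u ∈ closure (tailSet T x n₀ ∩ interior (closure (orbitSet T x))) :=
      dens T x hN n₀ hu
    have h4 : ν • (tailSet T x n₀ ∩ interior (closure (orbitSet T x))) ⊆
        closure (orbitSet T x) := by
      rintro _ ⟨w', ⟨⟨l', hl', m', hm', rfl⟩, -⟩, rfl⟩
      have hmem := key_induction T x hN hε0 hε1 hann k (ν * l')
        (by rw [norm_mul, hl', mul_one]; exact ⟨hlow, hhigh⟩) m' hm'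
      rwa [← smul_smul] at hmem
    have hmem := smul_mem_smul_set (a := ν) h3
    rw [← closure_smul₀' hν] at hmem
    exact ((closure_mono h4).trans closure_closure.subset) hmem
  exact interior_maximal hsub (isOpen_interior.smul₀ hν)

end TVS

end Stmt7Aux

open Stmt7Aux in
/-- For every nonzero complex number `μ`, the interior of the closure of
`{λ T^n x : λ ∈ 𝕋, n ≥ 0}` equals the interior of the closure of
`{λ T^n (μ x) : λ ∈ 𝕋, n ≥ 0}`. -/
theorem stmt7 {X : Type*} [AddCommGroup X] [Module ℂ X] [TopologicalSpace X]
    [IsTopologicalAddGroup X] [ContinuousSMul ℂ X] (T : X →L[ℂ] X) (x : X)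
    (μ : ℂ) (hμ : μ ≠ 0) :
    interior (closure
        {z : X | ∃ l : ℂ, ‖l‖ = 1 ∧ ∃ n : ℕ, z = l • (T ^ n) x}) =
      interior (closure
        {z : X | ∃ l : ℂ, ‖l‖ = 1 ∧ ∃ n : ℕ, z = l • (T ^ n) (μ • x)}) := by
  have hset : {z : X | ∃ l : ℂ, ‖l‖ = 1 ∧ ∃ n : ℕ, z = l • (T ^ n) (μ • x)}
      = μ • {z : X | ∃ l : ℂ, ‖l‖ = 1 ∧ ∃ n : ℕ, z = l • (T ^ n) x} := by
    ext z
    constructor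
    · rintro ⟨l, hl, n, rfl⟩
      exact ⟨l • (T ^ n) x, ⟨l, hl, n, rfl⟩, by rw [map_smul, smul_comm]⟩
    · rintro ⟨_, ⟨l, hl, n, rfl⟩, rfl⟩
      exact ⟨l, hl, n, by rw [map_smul, smul_comm]⟩
  rw [hset, closure_smul₀' hμ, interior_smul₀ hμ]
  apply Subset.antisymm
  · intro u hu
    refine ⟨μ⁻¹ • u, ?_, smul_inv_smul₀ hμ u⟩
    exact main_smul T x μ⁻¹ (inv_ne_zero hμ) ⟨u, hu, rfl⟩
  · exact main_smul T x μ hμ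
end

section
/- Let T = 2B, where B is the unweighted backward shift on ℓ²(ℤ₊), and let (f(n)) be a sequence of positive integers such that f(n+1) > a·f(n) for all n ∈ ℕ, for some real number a > 1. Then for every x ∈ HC(T) there exists θ ∈ ℝ such that the set {e^{2πi f(n)θ} T^n x : n ≥ 1} is not dense in ℓ²(ℤ₊). -/
open Filter Topology

section helpers
open Finset

lemma cardIntBound (s : Finset ℤ) (x y : ℝ) (hxy : x ≤ y)
    (h : ∀ i ∈ s, x ≤ (i:ℝ) ∧ (i:ℝ) ≤ y) :
    (s.card : ℝ) ≤ y - x + 1 := by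
  have hsub : s ⊆ Finset.Icc ⌈x⌉ ⌊y⌋ := by
    intro i hi
    rcases h i hi with ⟨h1, h2⟩
    exact Finset.mem_Icc.2 ⟨Int.ceil_le.2 h1, Int.le_floor.2 h2⟩
  have h1 : (s.card : ℝ) ≤ ((Finset.Icc ⌈x⌉ ⌊y⌋).card : ℝ) := by
    exact_mod_cast Nat.cast_le.2 (Finset.card_le_card hsub)
  refine h1.trans ?_
  rw [Int.card_Icc]
  have : ((⌊y⌋ + 1 - ⌈x⌉).toNat : ℝ) ≤ max ((⌊y⌋ + 1 - ⌈x⌉ : ℤ) : ℝ) 0 := by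
    rcases le_or_gt (⌊y⌋ + 1 - ⌈x⌉) 0 with hc | hc
    · simp [Int.toNat_of_nonpos hc, le_max_right]
    · have : ((⌊y⌋ + 1 - ⌈x⌉).toNat : ℤ) = ⌊y⌋ + 1 - ⌈x⌉ := Int.toNat_of_nonneg hc.le
      rw [show (((⌊y⌋ + 1 - ⌈x⌉).toNat : ℕ) : ℝ) = (((⌊y⌋ + 1 - ⌈x⌉).toNat : ℤ) : ℝ) by push_cast; ring, this]
      exact le_max_left _ _
  refine this.trans ?_
  have hy : ((⌊y⌋ : ℤ) : ℝ) ≤ y := Int.floor_le y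
  have hx : x ≤ ((⌈x⌉ : ℤ) : ℝ) := Int.le_ceil x
  have : ((⌊y⌋ + 1 - ⌈x⌉ : ℤ) : ℝ) ≤ y - x + 1 := by push_cast; linarith
  exact max_le this (by linarith)

lemma cardNatBound (s : Finset ℕ) (x y : ℝ) (hxy : x ≤ y)
    (h : ∀ i ∈ s, x ≤ (i:ℝ) ∧ (i:ℝ) ≤ y) :
    (s.card : ℝ) ≤ y - x + 1 := by
  have : s.card = (s.image (fun n : ℕ => (n : ℤ))).card :=
    (Finset.card_image_of_injective s (fun _ _ => by exact_mod_cast id)).symm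
  rw [this]
  refine cardIntBound _ x y hxy ?_
  intro i hi
  rcases Finset.mem_image.1 hi with ⟨n, hn, rfl⟩
  exact_mod_cast h n hn

lemma hgrow (f : ℕ → ℕ) (a : ℝ) (ha : 1 < a) (hf : ∀ n : ℕ, a * f n < f (n + 1)) :
    ∀ n d : ℕ, a ^ d * f n ≤ f (n + d) := by
  intro n d
  induction d with
  | zero => simp
  | succ d ih =>
    have h1 : a * f (n + d) < f (n + d + 1) := hf (n + d)
    have ha0 : (0:ℝ) < a := by linarith
    calc a ^ (d+1) * f n = a * (a ^ d * f n) := by ring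
    _ ≤ a * f (n + d) := by nlinarith
    _ ≤ f (n + d + 1) := h1.le

lemma gs1 (f : ℕ → ℕ) (a : ℝ) (ha : 1 < a) (hf : ∀ n : ℕ, a * f n < f (n + 1)) :
    ∀ t n0 : ℕ, (a - 1) / a * ∑ j ∈ Finset.Ioc n0 (n0 + t), (f j : ℝ) ≤ f (n0 + t) := by
  intro t
  induction t with
  | zero => intro n0; simp
  | succ t ih =>
    intro n0
    have hsplit : ∑ j ∈ Finset.Ioc n0 (n0 + t), (f j:ℝ) + ∑ j ∈ Finset.Ioc (n0 + t) (n0 + (t+1)), (f j:ℝ)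
        = ∑ j ∈ Finset.Ioc n0 (n0 + (t+1)), (f j:ℝ) :=
      Finset.sum_Ioc_consecutive _ (by omega) (by omega)
    have hsing : ∑ j ∈ Finset.Ioc (n0 + t) (n0 + (t+1)), (f j:ℝ) = f (n0 + t + 1) := by
      rw [show n0 + (t+1) = (n0 + t) + 1 by omega, Nat.Ioc_succ_singleton, Finset.sum_singleton]
    have h1 := ih n0
    have h2 : a * f (n0 + t) < f (n0 + t + 1) := hf _
    have ha0 : (0:ℝ) < a := by linarith
    rw [← hsplit, hsing]
    have key : (a-1)/a * ∑ j ∈ Finset.Ioc n0 (n0+t), (f j:ℝ) + (a-1)/a * f (n0+t+1)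
        ≤ f (n0+t) + (a-1)/a * f (n0+t+1) := by linarith
    calc (a-1)/a * (∑ j ∈ Finset.Ioc n0 (n0+t), (f j:ℝ) + f (n0+t+1)) 
        = (a-1)/a * ∑ j ∈ Finset.Ioc n0 (n0+t), (f j:ℝ) + (a-1)/a * f (n0+t+1) := by ring
      _ ≤ f (n0+t) + (a-1)/a * f (n0+t+1) := key
      _ ≤ (f (n0+t+1) : ℝ) := by
          have : (f (n0+t) : ℝ) ≤ f (n0+t+1) / a := by
            rw [le_div_iff₀ ha0]; nlinarith
          have h3 : (a-1)/a * f (n0+t+1) = f (n0+t+1) - f (n0+t+1)/a := by field_simp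
          linarith
      _ = f (n0 + (t+1)) := by norm_num [show n0 + t + 1 = n0 + (t+1) by omega]

lemma gs2 (f : ℕ → ℕ) (a : ℝ) (hfpos : ∀ n, 1 ≤ f n) (ha : 1 < a)
    (hf : ∀ n : ℕ, a * f n < f (n + 1)) :
    ∀ t n0 : ℕ, ∑ j ∈ Finset.Ioc n0 (n0 + t), (1 / (f j : ℝ)) ≤ 1 / ((a - 1) * f n0) := by
  intro t
  induction t with
  | zero =>
    intro n0; simp
    have ha0 : (0:ℝ) < a - 1 := by linarith
    have hf0 : (0:ℝ) < f n0 := by exact_mod_cast hfpos n0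
    positivity
  | succ t ih =>
    intro n0
    have hsplit : ∑ j ∈ Finset.Ioc n0 (n0+1), (1/(f j:ℝ)) + ∑ j ∈ Finset.Ioc (n0+1) (n0 + (t+1)), (1/(f j:ℝ))
        = ∑ j ∈ Finset.Ioc n0 (n0 + (t+1)), (1/(f j:ℝ)) :=
      Finset.sum_Ioc_consecutive _ (by omega) (by omega)
    have h1 : ∑ j ∈ Finset.Ioc (n0+1) (n0 + (t+1)), (1/(f j:ℝ)) ≤ 1/((a-1) * f (n0+1)) := by
      have := ih (n0+1)
      rwa [show n0 + 1 + t = n0 + (t+1) by omega] at this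
    rw [← hsplit, Nat.Ioc_succ_singleton, Finset.sum_singleton]
    have h2 : a * f n0 < f (n0 + 1) := hf n0
    have ha0 : (0:ℝ) < a - 1 := by linarith
    have hf0 : (0:ℝ) < f n0 := by exact_mod_cast hfpos n0
    have hf1 : (0:ℝ) < f (n0+1) := by exact_mod_cast hfpos (n0+1)
    have key : 1/(f (n0+1):ℝ) + 1/((a-1) * f (n0+1)) = a / ((a-1) * f (n0+1)) := by
      field_simp
      ring
    have h3 : a / ((a-1) * f (n0+1)) ≤ 1 / ((a-1) * f n0) := by
      rw [div_le_div_iff₀ (by positivity) (by positivity)]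
      nlinarith
    linarith


set_option maxHeartbeats 2000000 in
lemma step (f : ℕ → ℕ) (hfpos : ∀ n, 1 ≤ f n) (a : ℝ) (ha : 1 < a)
    (hf : ∀ n : ℕ, a * f n < f (n + 1)) (β : ℕ → ℝ)
    (m : ℕ) (hm : 1 ≤ m) (hma : (16*(m:ℝ) + 16) ≤ a^m)
    (c : ℝ) (hc : c = (a-1)/(8*a))
    (δ : ℝ) (hδ0 : 0 < δ) (hδ1 : δ ≤ 1/(16*m)) (hδ2 : δ ≤ c*(a-1)/32) (hδ4 : δ ≤ 1/8)
    (k : ℕ) (u : ℝ) :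
    ∃ u' : ℝ, u ≤ u' ∧ u' + c/(f ((k+1)*m)) ≤ u + c/(f (k*m)) ∧
      ∀ n, k*m < n → n ≤ (k+1)*m → ∀ θ ∈ Set.Icc u' (u' + c/(f ((k+1)*m))),
        ∀ p : ℤ, δ < |(f n : ℝ) * θ + β n - p| := by
  classical
  have ha0 : (0:ℝ) < a := by linarith
  have ha1 : (0:ℝ) < a - 1 := by linarith
  have hcpos : 0 < c := by rw [hc]; positivity
  set F : ℝ := (f (k*m) : ℝ) with hFdef
  set F' : ℝ := (f ((k+1)*m) : ℝ) with hF'def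
  have hFpos : 0 < F := by rw [hFdef]; exact_mod_cast hfpos (k*m)
  have hF'pos : 0 < F' := by rw [hF'def]; exact_mod_cast hfpos ((k+1)*m)
  have hR : a^m * F ≤ F' := by
    have := hgrow f a ha hf (k*m) m
    rw [hF'def, hFdef, show (k+1)*m = k*m + m by ring]
    exact this
  set L : ℝ := c / F with hLdef
  set ℓ : ℝ := c / F' with hldef
  have hℓpos : 0 < ℓ := by rw [hldef]; positivity
  set R : ℝ := F' / F with hRdef
  have hRge : a^m ≤ R := by rw [hRdef, le_div_iff₀ hFpos]; exact hR
  set M : ℕ := ⌊R⌋₊ with hMdef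
  have hRpos : 0 < R := by rw [hRdef]; positivity
  have hM1 : (M:ℝ) ≤ R := Nat.floor_le hRpos.le
  have hM2 : R < (M:ℝ) + 1 := Nat.lt_floor_add_one R
  have hMbig : 16*(m:ℝ) + 15 ≤ M := by linarith
  have hmR : (1:ℝ) ≤ m := by exact_mod_cast hm
  have hMℓ : (M:ℝ) * ℓ ≤ L := by
    rw [hldef, hLdef]
    calc (M:ℝ) * (c/F') ≤ R * (c/F') := by
          apply mul_le_mul_of_nonneg_right hM1 (by positivity)
      _ = c / F := by rw [hRdef]; field_simp
  set b : ℕ → ℝ := fun j => (f j : ℝ) * u + β j with hbdef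
  set w : ℕ → ℝ := fun j => (f j : ℝ) * ℓ with hwdef
  have hwpos : ∀ j, 0 < w j := fun j => by
    have : (0:ℝ) < f j := by exact_mod_cast hfpos j
    rw [hwdef]; exact mul_pos this hℓpos
  set block : Finset ℕ := Finset.Ioc (k*m) (k*m+m) with hblockdef
  set P : ℕ → Finset ℤ := fun j => Finset.Icc ⌈b j - δ⌉ ⌊b j + M * w j + δ⌋ with hPdef
  set S : ℕ → ℤ → Finset ℕ := fun j p => (range M).filter
    (fun i => ((p:ℝ) - b j - δ)/(w j) - 1 ≤ (i:ℝ) ∧ (i:ℝ) ≤ ((p:ℝ) - b j + δ)/(w j)) with hSdef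
  set Killed : Finset ℕ := (range M).filter
    (fun i => ∃ j ∈ block, ∃ θ' ∈ Set.Icc (u + i*ℓ) (u + (i+1)*ℓ), ∃ p : ℤ,
      |(f j : ℝ) * θ' + β j - p| ≤ δ) with hKdef
  clear_value F F' L ℓ R M b w block P S Killed
  -- inclusion
  have hsub : Killed ⊆ block.biUnion (fun j => (P j).biUnion (fun p => S j p)) := by
    intro i hi
    rw [hKdef, Finset.mem_filter] at hi
    obtain ⟨hiM, j, hjb, θ', hθ', p, hp⟩ := hi
    have hiM' : i < M := Finset.mem_range.1 hiM
    have hfj : (0:ℝ) < f j := by exact_mod_cast hfpos j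
    have habs := abs_le.1 hp
    have hθ1 := hθ'.1
    have hθ2 := hθ'.2
    have hplo : b j + i * w j - δ ≤ p := by
      have h1 : (f j : ℝ) * (u + i*ℓ) ≤ (f j : ℝ) * θ' :=
        mul_le_mul_of_nonneg_left hθ1 hfj.le
      have h2 : (f j:ℝ) * θ' + β j - δ ≤ p := by linarith [habs.2]
      have h3 : b j + i * w j = (f j:ℝ)*(u + i*ℓ) + β j := by rw [hbdef, hwdef]; ring
      linarith
    have hphi : (p:ℝ) ≤ b j + (i+1) * w j + δ := by
      have h1 : (f j : ℝ) * θ' ≤ (f j : ℝ) * (u + (i+1)*ℓ) :=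
        mul_le_mul_of_nonneg_left hθ2 hfj.le
      have h2 : (p:ℝ) ≤ (f j:ℝ) * θ' + β j + δ := by linarith [habs.1]
      have h3 : b j + (i+1) * w j = (f j:ℝ)*(u + (i+1)*ℓ) + β j := by rw [hbdef, hwdef]; ring
      linarith
    have hwnn : 0 ≤ w j := (hwpos j).le
    have hiw : 0 ≤ (i:ℝ) * w j := mul_nonneg (Nat.cast_nonneg i) hwnn
    have hi1M : ((i:ℝ)+1) ≤ M := by exact_mod_cast hiM'
    apply Finset.mem_biUnion.2
    refine ⟨j, hjb, Finset.mem_biUnion.2 ⟨p, ?_, ?_⟩⟩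
    · rw [hPdef]
      refine Finset.mem_Icc.2 ⟨Int.ceil_le.2 (by linarith), Int.le_floor.2 ?_⟩
      have : ((i:ℝ)+1) * w j ≤ M * w j := mul_le_mul_of_nonneg_right hi1M hwnn
      linarith
    · rw [hSdef]
      refine Finset.mem_filter.2 ⟨hiM, ?_, ?_⟩
      · have h4 : ((p:ℝ) - b j - δ) / w j ≤ (i:ℝ) + 1 := by
          rw [div_le_iff₀ (hwpos j)]
          nlinarith [hphi]
        linarith
      · rw [le_div_iff₀ (hwpos j)]
        linarith
  -- cardinality bounds
  have hScard : ∀ j p, ((S j p).card : ℝ) ≤ 2*δ/(w j) + 2 := by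
    intro j p
    have hxy : ((p:ℝ) - b j - δ)/(w j) - 1 ≤ ((p:ℝ) - b j + δ)/(w j) := by
      have hwj := hwpos j
      have h1 : ((p:ℝ) - b j - δ)/(w j) ≤ ((p:ℝ) - b j + δ)/(w j) := by
        gcongr
        linarith
      linarith
    have hb := cardNatBound (S j p) _ _ hxy (by
      intro i hi
      rw [hSdef, Finset.mem_filter] at hi
      exact hi.2)
    have heq : ((p:ℝ) - b j + δ)/(w j) - ((p:ℝ) - b j - δ)/(w j) = 2*δ/(w j) := by
      rw [div_sub_div_same]
      congr 1
      ring
    linarith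
  have hPcard : ∀ j, ((P j).card : ℝ) ≤ M * w j + 2*δ + 1 := by
    intro j
    have hwnn : 0 ≤ (M:ℝ) * w j := mul_nonneg (Nat.cast_nonneg M) (hwpos j).le
    have hxy : b j - δ ≤ b j + M * w j + δ := by linarith
    have hb := cardIntBound (P j) (b j - δ) (b j + M * w j + δ) hxy (by
      intro p hp
      rw [hPdef, Finset.mem_Icc] at hp
      constructor
      · calc b j - δ ≤ ((⌈b j - δ⌉ : ℤ) : ℝ) := Int.le_ceil _
          _ ≤ p := by exact_mod_cast hp.1
      · calc (p:ℝ) ≤ ((⌊b j + M * w j + δ⌋ : ℤ) : ℝ) := by exact_mod_cast hp.2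
          _ ≤ b j + M * w j + δ := Int.floor_le _)
    linarith
  -- sums over the block
  have hblockcard : (block.card : ℕ) = m := by rw [hblockdef, Nat.card_Ioc]; omega
  have hsum1 : ∑ j ∈ block, (f j : ℝ) ≤ F' * a/(a-1) := by
    have h1 := gs1 f a ha hf m (k*m)
    have h2 : (f (k*m + m) : ℝ) = F' := by rw [hF'def, show (k+1)*m = k*m+m by ring]
    rw [hblockdef]
    rw [h2] at h1
    rw [le_div_iff₀ ha1]
    have h4 := mul_le_mul_of_nonneg_right h1 ha0.le
    have h5 : (a-1)/a * (∑ j ∈ Finset.Ioc (k*m) (k*m+m), (f j : ℝ)) * a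
        = (∑ j ∈ Finset.Ioc (k*m) (k*m+m), (f j : ℝ)) * (a - 1) := by
      field_simp
      try ring
    rw [h5] at h4
    linarith
  have hsum2 : ∑ j ∈ block, (1/(f j : ℝ)) ≤ 1/((a-1) * F) := by
    have h1 := gs2 f a hfpos ha hf m (k*m)
    rw [hblockdef]
    rw [hFdef]
    exact h1
  -- total bound
  have hKcard : (Killed.card : ℝ) < M := by
    have h1 : (Killed.card : ℝ) ≤ ∑ j ∈ block, ∑ p ∈ P j, ((S j p).card : ℝ) := by
      have := (Finset.card_le_card hsub).trans
        ((Finset.card_biUnion_le).trans (Finset.sum_le_sum (fun j _ => Finset.card_biUnion_le)))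
      exact_mod_cast this
    have h2 : ∀ j ∈ block, ∑ p ∈ P j, ((S j p).card : ℝ)
        ≤ 2*δ*M + 2*M*(w j) + 4*δ*(1/(w j)) + 4 := by
      intro j _
      have hwj := hwpos j
      have hfac : (0:ℝ) ≤ 2*δ/(w j) + 2 :=
        add_nonneg (div_nonneg (by linarith) hwj.le) (by norm_num)
      calc ∑ p ∈ P j, ((S j p).card : ℝ) ≤ ∑ p ∈ P j, (2*δ/(w j) + 2) :=
            Finset.sum_le_sum (fun p _ => hScard j p)
        _ = ((P j).card : ℝ) * (2*δ/(w j) + 2) := by rw [Finset.sum_const]; push_cast; ring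
        _ ≤ (M * w j + 2*δ + 1) * (2*δ/(w j) + 2) :=
            mul_le_mul_of_nonneg_right (hPcard j) hfac
        _ ≤ (M * w j + 2) * (2*δ/(w j) + 2) := by
            apply mul_le_mul_of_nonneg_right ?_ hfac
            linarith
        _ = 2*δ*M + 2*M*(w j) + 4*δ*(1/(w j)) + 4 := by
            field_simp
            ring
    have h3 : (Killed.card : ℝ) ≤ (block.card : ℝ) * (2*δ*M + 4) + 2*M*(∑ j ∈ block, w j)
        + 4*δ*(∑ j ∈ block, 1/(w j)) := by
      calc (Killed.card : ℝ) ≤ ∑ j ∈ block, ∑ p ∈ P j, ((S j p).card : ℝ) := h1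
        _ ≤ ∑ j ∈ block, (2*δ*M + 2*M*(w j) + 4*δ*(1/(w j)) + 4) := Finset.sum_le_sum h2
        _ = (block.card : ℝ) * (2*δ*M + 4) + 2*M*(∑ j ∈ block, w j)
            + 4*δ*(∑ j ∈ block, 1/(w j)) := by
            rw [Finset.sum_add_distrib, Finset.sum_add_distrib, Finset.sum_add_distrib,
              Finset.sum_const, Finset.sum_const, ← Finset.mul_sum, ← Finset.mul_sum]
            push_cast
            ring
    have hsumw : ∑ j ∈ block, w j ≤ 1/8 := by
      have : ∑ j ∈ block, w j = ℓ * ∑ j ∈ block, (f j : ℝ) := by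
        rw [Finset.mul_sum]; apply Finset.sum_congr rfl; intro j _; rw [hwdef]; ring
      rw [this]
      calc ℓ * ∑ j ∈ block, (f j : ℝ) ≤ ℓ * (F' * a/(a-1)) :=
            mul_le_mul_of_nonneg_left hsum1 hℓpos.le
        _ = 1/8 := by
            rw [hldef, hc]
            have e2 : F' ≠ 0 := hF'pos.ne'
            have e3 : a ≠ 0 := ha0.ne'
            have e4 : a - 1 ≠ 0 := ha1.ne'
            field_simp
            try ring
            try exact Or.inl trivial
    have hsuminv : ∑ j ∈ block, 1/(w j) ≤ R / (c * (a-1)) := by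
      have heq : ∑ j ∈ block, 1/(w j) = (1/ℓ) * ∑ j ∈ block, (1/(f j:ℝ)) := by
        rw [Finset.mul_sum]; apply Finset.sum_congr rfl; intro j _
        rw [hwdef]
        have h5 : ((f j:ℝ)) ≠ 0 := by
          have : (0:ℝ) < f j := by exact_mod_cast hfpos j
          exact this.ne'
        have h6 : ℓ ≠ 0 := hℓpos.ne'
        field_simp
        try ring
      rw [heq]
      calc (1/ℓ) * ∑ j ∈ block, (1/(f j:ℝ)) ≤ (1/ℓ) * (1/((a-1)*F)) := by
            apply mul_le_mul_of_nonneg_left hsum2 (one_div_nonneg.2 hℓpos.le)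
        _ = R / (c * (a-1)) := by
            have e1 : (1:ℝ)/ℓ = F'/c := by rw [hldef, one_div_div]
            rw [e1, hRdef]
            have e2 : F ≠ 0 := hFpos.ne'
            have e3 : c ≠ 0 := hcpos.ne'
            have e4 : a - 1 ≠ 0 := ha1.ne'
            field_simp
            try ring
            try exact Or.inl trivial
    have hterm1 : (block.card : ℝ) * (2*δ*M + 4) ≤ M/8 + 4*m := by
      rw [hblockcard]
      have hδm : δ * m ≤ 1/16 := by
        have h6 : δ * m ≤ (1/(16*m)) * m := mul_le_mul_of_nonneg_right hδ1 (by positivity)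
        have h7 : (1/(16*(m:ℝ))) * m = 1/16 := by
          field_simp
          try ring
        linarith
      have hMnn : (0:ℝ) ≤ M := by positivity
      nlinarith
    have hterm2 : 2*(M:ℝ)*(∑ j ∈ block, w j) ≤ M/4 := by
      have hMnn : (0:ℝ) ≤ 2*M := by positivity
      calc 2*(M:ℝ)*(∑ j ∈ block, w j) ≤ 2*M*(1/8) :=
        mul_le_mul_of_nonneg_left hsumw hMnn
        _ = M/4 := by ring
    have hterm3 : 4*δ*(∑ j ∈ block, 1/(w j)) ≤ (M+1)/8 := by
      have h8 : (0:ℝ) ≤ 4*δ := by positivity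
      have h9 : 0 ≤ R / (c*(a-1)) := div_nonneg hRpos.le (mul_nonneg hcpos.le ha1.le)
      calc 4*δ*(∑ j ∈ block, 1/(w j)) ≤ 4*δ*(R/(c*(a-1))) :=
            mul_le_mul_of_nonneg_left hsuminv h8
        _ ≤ 4*(c*(a-1)/32)*(R/(c*(a-1))) := by
            apply mul_le_mul_of_nonneg_right ?_ h9
            linarith
        _ = R/8 := by field_simp; ring
        _ ≤ (M+1)/8 := by linarith
    have : (Killed.card : ℝ) ≤ M/8 + 4*m + M/4 + (M+1)/8 := by linarith
    linarith
  -- pick a good candidate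
  have hex : ∃ i, i ∈ range M ∧ i ∉ Killed := by
    by_contra hcon
    push_neg at hcon
    have hsub2 : range M ⊆ Killed := fun i hi => hcon i hi
    have := Finset.card_le_card hsub2
    rw [Finset.card_range] at this
    have : (M:ℝ) ≤ Killed.card := by exact_mod_cast this
    linarith
  obtain ⟨i, hiM, hiK⟩ := hex
  have hiM' : i < M := Finset.mem_range.1 hiM
  refine ⟨u + i*ℓ, le_add_of_nonneg_right (mul_nonneg (Nat.cast_nonneg i) hℓpos.le), ?_, ?_⟩
  · have hi1 : ((i:ℝ)+1) ≤ M := by exact_mod_cast hiM'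
    have h9 : ((i:ℝ))*ℓ + ℓ ≤ (M:ℝ)*ℓ := by nlinarith
    linarith
  · intro n hn1 hn2 θ hθ p
    by_contra hcon
    push_neg at hcon
    apply hiK
    rw [hKdef, Finset.mem_filter]
    refine ⟨hiM, n, ?_, θ, ?_, p, hcon⟩
    · rw [hblockdef, Finset.mem_Ioc]
      have : (k+1)*m = k*m + m := by ring
      exact ⟨hn1, by omega⟩
    · constructor
      · exact hθ.1
      · have := hθ.2
        calc θ ≤ u + i*ℓ + ℓ := this
          _ = u + ((i:ℝ)+1)*ℓ := by ring

lemma dio (f : ℕ → ℕ) (hfpos : ∀ n, 1 ≤ f n) (a : ℝ) (ha : 1 < a)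
    (hf : ∀ n : ℕ, a * f n < f (n + 1)) (β : ℕ → ℝ) :
    ∃ δ : ℝ, 0 < δ ∧ δ ≤ 1/8 ∧ ∃ θ : ℝ, ∀ n, 1 ≤ n → ∀ p : ℤ,
      δ ≤ |(f n : ℝ) * θ + β n - p| := by
  classical
  have ha1 : (0:ℝ) < a - 1 := by linarith
  -- choose m
  obtain ⟨m, hm, hma⟩ : ∃ m : ℕ, 1 ≤ m ∧ (16*(m:ℝ) + 16) ≤ a^m := by
    set ε : ℝ := a - 1 with hε
    set k : ℕ := max 1 ⌈(48:ℝ)/ε^2⌉₊ with hk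
    clear_value ε k
    have hk1 : 1 ≤ k := by rw [hk]; exact le_max_left _ _
    have hk2 : (48:ℝ)/ε^2 ≤ k := by
      calc (48:ℝ)/ε^2 ≤ (⌈(48:ℝ)/ε^2⌉₊ : ℝ) := Nat.le_ceil _
        _ ≤ k := by rw [hk]; exact_mod_cast Nat.cast_le.2 (le_max_right _ _)
    refine ⟨2*k, by omega, ?_⟩
    have hak : (1 + (k:ℝ)*ε) ≤ a^k := by
      have := one_add_mul_le_pow (by linarith : (-2:ℝ) ≤ ε) k
      rwa [show (1:ℝ) + ε = a by rw [hε]; ring] at this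
    have hkε : (48:ℝ) ≤ (k:ℝ)*ε^2 := by
      have hε2 : (0:ℝ) < ε^2 := by positivity
      have h5 := mul_le_mul_of_nonneg_right hk2 hε2.le
      have h6 : (48:ℝ)/ε^2 * ε^2 = 48 := by field_simp
      linarith
    have hkR : (1:ℝ) ≤ k := by exact_mod_cast hk1
    have h2 : a^(2*k) = (a^k)^2 := by rw [← pow_mul, mul_comm]
    have hknn : (0:ℝ) ≤ (k:ℝ)*ε := by positivity
    have h3 : ((k:ℝ)*ε)^2 ≤ (a^k)^2 := by nlinarith
    have h4 : ((k:ℝ)*ε)^2 = (k:ℝ)*((k:ℝ)*ε^2) := by ring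
    push_cast
    rw [h2]
    nlinarith
  set c : ℝ := (a-1)/(8*a) with hc
  have hcpos : 0 < c := by rw [hc]; positivity
  have hmR : (1:ℝ) ≤ m := by exact_mod_cast hm
  set δ : ℝ := min (1/(16*(m:ℝ))) (min (c*(a-1)/32) (1/8)) with hδ
  have hδ0 : 0 < δ := by
    rw [hδ]
    apply lt_min (by positivity) (lt_min (by positivity) (by norm_num))
  have hδ1 : δ ≤ 1/(16*(m:ℝ)) := min_le_left _ _
  have hδ2 : δ ≤ c*(a-1)/32 := le_trans (min_le_right _ _) (min_le_left _ _)
  have hδ4 : δ ≤ 1/8 := le_trans (min_le_right _ _) (min_le_right _ _)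
  have step' := step f hfpos a ha hf β m hm hma c hc δ hδ0 hδ1 hδ2 hδ4
  choose g hg1 hg2 hg3 using step'
  set u : ℕ → ℝ := fun n => Nat.rec 0 (fun k uk => g k uk) n with hu
  have hurec : ∀ k, u (k+1) = g k (u k) := fun k => rfl
  have humono : ∀ k, u k ≤ u (k+1) := fun k => by rw [hurec]; exact hg1 k (u k)
  have hunest : ∀ k, u (k+1) + c/(f ((k+1)*m)) ≤ u k + c/(f (k*m)) := fun k => by
    rw [hurec]; exact hg2 k (u k)
  have humain : ∀ k, ∀ n, k*m < n → n ≤ (k+1)*m →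
      ∀ θ ∈ Set.Icc (u (k+1)) (u (k+1) + c/(f ((k+1)*m))), ∀ p : ℤ,
        δ < |(f n : ℝ) * θ + β n - p| := fun k => by
    rw [hurec]; exact hg3 k (u k)
  -- chain facts
  have hchain : ∀ k j, k ≤ j → u k ≤ u j ∧ u j + c/(f (j*m)) ≤ u k + c/(f (k*m)) := by
    intro k j hkj
    induction j, hkj using Nat.le_induction with
    | base => exact ⟨le_refl _, le_refl _⟩
    | succ j hkj ih =>
      have h1 := humono j
      have h2 := hunest j
      have hpos : (0:ℝ) < c/(f ((j+1)*m)) := by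
        have : (0:ℝ) < f ((j+1)*m) := by exact_mod_cast hfpos _
        positivity
      constructor
      · exact le_trans ih.1 h1
      · exact le_trans h2 ih.2
  have hbdd : BddAbove (Set.range u) := by
    refine ⟨u 0 + c/(f 0), ?_⟩
    rintro y ⟨j, rfl⟩
    have h1 := (hchain 0 j (Nat.zero_le j)).2
    have hpos : (0:ℝ) < c/(f (j*m)) := by
      have : (0:ℝ) < f (j*m) := by exact_mod_cast hfpos _
      positivity
    have h0 : (0:ℕ)*m = 0 := by ring
    rw [h0] at h1
    linarith
  set θ : ℝ := ⨆ j, u j with hθ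
  have hθmem : ∀ k, u k ≤ θ ∧ θ ≤ u k + c/(f (k*m)) := by
    intro k
    constructor
    · exact le_ciSup hbdd k
    · apply ciSup_le
      intro j
      rcases le_total k j with h | h
      · have h1 := (hchain k j h).2
        have hpos : (0:ℝ) < c/(f (j*m)) := by
          have : (0:ℝ) < f (j*m) := by exact_mod_cast hfpos _
          positivity
        linarith
      · have h1 := (hchain j k h).1
        have hpos : (0:ℝ) < c/(f (k*m)) := by
          have : (0:ℝ) < f (k*m) := by exact_mod_cast hfpos _
          positivity
        linarith
  refine ⟨δ, hδ0, hδ4, θ, ?_⟩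
  intro n hn p
  set k : ℕ := (n-1)/m with hkdef
  have hblock : k*m < n ∧ n ≤ (k+1)*m := by
    have h1 : k*m ≤ n-1 := Nat.div_mul_le_self (n-1) m
    have h2 : n-1 < (k+1) * m := by
      rw [hkdef]
      exact (Nat.div_lt_iff_lt_mul (show 0 < m by omega)).1 (Nat.lt_succ_self _)
    constructor
    · calc k*m ≤ n-1 := h1
        _ < n := Nat.sub_lt (by omega) one_pos
    · have h3 : n - 1 + 1 ≤ (k+1)*m := Nat.succ_le_of_lt h2
      rwa [Nat.sub_add_cancel (by omega : 1 ≤ n)] at h3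
  have := humain k n hblock.1 hblock.2 θ ⟨(hθmem (k+1)).1, (hθmem (k+1)).2⟩ p
  exact this.le

end helpers

lemma absexp (φ : ℝ) : (‖Complex.exp ((φ:ℂ) * Complex.I) - 1‖)^2 = 2*(1 - Real.cos φ) := by
  rw [Complex.sq_norm, Complex.exp_mul_I]
  rw [← Complex.ofReal_cos, ← Complex.ofReal_sin]
  simp only [Complex.normSq_apply, Complex.add_re, Complex.add_im, Complex.sub_re,
    Complex.sub_im, Complex.one_re, Complex.one_im, Complex.mul_re, Complex.mul_im,
    Complex.I_re, Complex.I_im, Complex.ofReal_re, Complex.ofReal_im]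
  ring_nf
  nlinarith [Real.sin_sq_add_cos_sq φ]

-- key complex estimate: if dist(t,ℤ) ≥ δ (0<δ≤1/8), c : ℂ, then |e^{2πit·I}·ρ... 
lemma keyest (δ : ℝ) (hδ0 : 0 < δ) (hδ4 : δ ≤ 1/8) (t : ℝ)
    (ht : ∀ p : ℤ, δ ≤ |t - p|) :
    Real.sqrt (2*(1 - Real.cos (2*Real.pi*δ))) / 2 ≤ ‖Complex.exp (((2*Real.pi*t : ℝ):ℂ) * Complex.I) - 1‖ / 2 := by
  have hπ := Real.pi_pos
  -- cos (2πt) ≤ cos (2πδ)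
  have hcos : Real.cos (2*Real.pi*t) ≤ Real.cos (2*Real.pi*δ) := by
    have hs2 : |t - round t| ≤ 1/2 := abs_sub_round t
    have hs1 : δ ≤ |t - round t| := ht (round t)
    have h1 : Real.cos (2*Real.pi*t) = Real.cos (2*Real.pi*(t - round t)) := by
      rw [show 2*Real.pi*t = 2*Real.pi*(t - round t) + (round t : ℝ) * (2*Real.pi) by ring]
      rw [Real.cos_add_int_mul_two_pi]
    rw [h1, ← Real.cos_abs (2*Real.pi*(t - round t))]
    have habs : |2*Real.pi*(t - round t)| = 2*Real.pi*|t - round t| := by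
      rw [abs_mul, abs_of_nonneg (by positivity : (0:ℝ) ≤ 2*Real.pi)]
    rw [habs]
    apply Real.cos_le_cos_of_nonneg_of_le_pi (by positivity)
    · calc 2*Real.pi*|t - round t| ≤ 2*Real.pi*(1/2) := by nlinarith
        _ = Real.pi := by ring
    · nlinarith
  have hsq : (‖Complex.exp (((2*Real.pi*t : ℝ):ℂ) * Complex.I) - 1‖)^2
      = 2*(1 - Real.cos (2*Real.pi*t)) := absexp (2*Real.pi*t)
  have h2 : Real.sqrt (2*(1 - Real.cos (2*Real.pi*δ)))
      ≤ ‖Complex.exp (((2*Real.pi*t : ℝ):ℂ) * Complex.I) - 1‖ := by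
    rw [show ‖Complex.exp (((2*Real.pi*t : ℝ):ℂ) * Complex.I) - 1‖
      = Real.sqrt ((‖Complex.exp (((2*Real.pi*t : ℝ):ℂ) * Complex.I) - 1‖)^2) by
        rw [Real.sqrt_sq (norm_nonneg _)]]
    apply Real.sqrt_le_sqrt
    rw [hsq]
    linarith
  linarith

/-- Let `T = 2B` where `B` is the unweighted backward shift on
`ℓ²(ℤ₊)` (characterized by `(B x)(n) = x(n+1)`), and let `(f(n))` be a sequence of
positive integers with `f(n+1) > a·f(n)` for all `n`, for some real `a > 1`. Then
for every `x ∈ HC(T)` there is `θ ∈ ℝ` such that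
`{e^{2πi f(n)θ} T^n x : n ≥ 1}` is not dense in `ℓ²(ℤ₊)`. -/

theorem stmt13
    (B : lp (fun _ : ℕ => ℂ) 2 →L[ℂ] lp (fun _ : ℕ => ℂ) 2)
    (hB : ∀ (x : lp (fun _ : ℕ => ℂ) 2) (n : ℕ), (B x : ℕ → ℂ) n = (x : ℕ → ℂ) (n + 1))
    (T : lp (fun _ : ℕ => ℂ) 2 →L[ℂ] lp (fun _ : ℕ => ℂ) 2)
    (hT : T = (2 : ℂ) • B)
    (f : ℕ → ℕ) (hfpos : ∀ n, 1 ≤ f n)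
    (a : ℝ) (ha : 1 < a) (hf : ∀ n : ℕ, a * f n < f (n + 1))
    (x : lp (fun _ : ℕ => ℂ) 2)
    (hx : Dense (Set.range fun n : ℕ => (T ^ n) x)) :
    ∃ θ : ℝ, ¬ Dense {y : lp (fun _ : ℕ => ℂ) 2 | ∃ n : ℕ, 1 ≤ n ∧
      y = Complex.exp (2 * Real.pi * Complex.I * (f n : ℂ) * (θ : ℂ)) • (T ^ n) x} := by
  have hπ := Real.pi_pos
  set cf : ℕ → ℂ := fun n => ((T ^ n) x : ℕ → ℂ) 0 with hcf
  set β : ℕ → ℝ := fun n => (cf n).arg / (2*Real.pi) with hβ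
  obtain ⟨δ, hδ0, hδ4, θ, hθ⟩ := dio f hfpos a ha hf β
  refine ⟨θ, ?_⟩
  set r : ℝ := Real.sqrt (2*(1 - Real.cos (2*Real.pi*δ))) / 2 with hr
  have hrpos : 0 < r := by
    rw [hr]
    have h0 : 0 < 2*Real.pi*δ := by positivity
    have h1 : 2*Real.pi*δ ≤ Real.pi := by nlinarith
    have hcos1 : Real.cos (2*Real.pi*δ) < 1 := by
      have h2 : Real.cos (2*Real.pi*δ) < Real.cos 0 :=
        Real.strictAntiOn_cos ⟨le_refl 0, hπ.le⟩ ⟨h0.le, h1⟩ h0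
      rwa [Real.cos_zero] at h2
    have : 0 < Real.sqrt (2*(1 - Real.cos (2*Real.pi*δ))) := Real.sqrt_pos.2 (by linarith)
    linarith
  have hr1 : r ≤ 1 := by
    rw [hr]
    have h1 : (2:ℝ)*(1 - Real.cos (2*Real.pi*δ)) ≤ 4 := by
      have := Real.neg_one_le_cos (2*Real.pi*δ)
      linarith
    have h2 : Real.sqrt (2*(1 - Real.cos (2*Real.pi*δ))) ≤ Real.sqrt 4 := Real.sqrt_le_sqrt h1
    have h3 : Real.sqrt 4 = 2 := by
      rw [show (4:ℝ) = 2^2 by norm_num, Real.sqrt_sq (by norm_num : (0:ℝ) ≤ 2)]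
    linarith
  -- the avoided point
  set e0 : lp (fun _ : ℕ => ℂ) 2 := lp.single 2 0 (1:ℂ) with he0
  intro hD
  obtain ⟨y, hyS, hyd⟩ := Metric.mem_closure_iff.1 (hD e0) r hrpos
  obtain ⟨n, hn1, rfl⟩ := hyS
  set lam : ℂ := Complex.exp (2 * Real.pi * Complex.I * (f n : ℂ) * (θ : ℂ)) with hlam
  -- coordinate zero of the orbit point
  have hy0 : ((lam • (T ^ n) x : lp (fun _ : ℕ => ℂ) 2) : ℕ → ℂ) 0 = lam * cf n := by
    rw [lp.coeFn_smul]
    simp [hcf]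
  have he00 : ((e0 : lp (fun _ : ℕ => ℂ) 2) : ℕ → ℂ) 0 = 1 := by
    rw [he0]
    simp [lp.single_apply]
  -- lower bound on the coordinate difference
  have hkey : r ≤ ‖lam * cf n - 1‖ := by
    set t : ℝ := (f n : ℝ) * θ + β n with htdef
    have hden : ∀ p : ℤ, δ ≤ |t - p| := fun p => hθ n hn1 p
    have h2r := keyest δ hδ0 hδ4 t hden
    set E : ℂ := Complex.exp (((2*Real.pi*t : ℝ):ℂ) * Complex.I) with hE
    have hEabs : ‖E‖ = 1 := by
      rw [hE]; exact Complex.norm_exp_ofReal_mul_I _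
    rcases eq_or_ne (cf n) 0 with hc0 | hc0
    · rw [hc0]
      simp
      linarith
    · set ρ : ℝ := ‖cf n‖ with hρ
      have hρpos : 0 < ρ := by rw [hρ]; exact norm_pos_iff.mpr hc0
      have hfact : lam * cf n = (ρ:ℂ) * E := by
        have h1 : (ρ:ℂ) * Complex.exp ((Complex.arg (cf n) : ℂ) * Complex.I) = cf n :=
          Complex.norm_mul_exp_arg_mul_I (cf n)
        rw [hlam, hE, ← h1, ← mul_assoc, mul_comm (Complex.exp _) ((ρ:ℂ)), mul_assoc,
          ← Complex.exp_add]
        congr 1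
        have h2 : 2*Real.pi*t = 2*Real.pi*((f n : ℝ)*θ) + Complex.arg (cf n) := by
          rw [htdef, hβ]
          field_simp
        rw [h2]
        push_cast
        ring
      rcases le_total r (|ρ - 1|) with hcase | hcase
      · -- modulus already far from 1
        have h1 : ‖lam * cf n‖ = ρ := by
          rw [hfact, norm_mul, hEabs, Complex.norm_real, Real.norm_eq_abs, abs_of_pos hρpos, mul_one]
        have h2 : |‖lam * cf n‖ - ‖(1:ℂ)‖| ≤ ‖lam * cf n - 1‖ := by
          have := abs_norm_sub_norm_le (lam * cf n) (1:ℂ)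
          simpa using this
        rw [h1, norm_one] at h2
        linarith
      · -- modulus close to 1, use angle
        have htri : ‖E - 1‖ ≤ ‖E - (ρ:ℂ)*E‖ + ‖(ρ:ℂ)*E - 1‖ := by
          have := norm_add_le (E - (ρ:ℂ)*E) ((ρ:ℂ)*E - 1)
          simpa using this
        have hmid : ‖E - (ρ:ℂ)*E‖ = |1 - ρ| := by
          rw [show E - (ρ:ℂ)*E = (1 - (ρ:ℂ))*E by ring, norm_mul, hEabs, mul_one]
          rw [show (1:ℂ) - (ρ:ℂ) = ((1 - ρ : ℝ) : ℂ) by push_cast; ring, Complex.norm_real, Real.norm_eq_abs]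
        have h2rE : 2*r ≤ ‖E - 1‖ := by
          rw [hE]
          rw [hr] at *
          linarith [h2r]
        rw [hfact]
        have h5 : |1 - ρ| = |ρ - 1| := abs_sub_comm 1 ρ
        rw [hmid, h5] at htri
        linarith
  -- conclude contradiction
  have hnorm : ‖lam * cf n - 1‖
      ≤ ‖(lam • (T ^ n) x : lp (fun _ : ℕ => ℂ) 2) - e0‖ := by
    have h1 := lp.norm_apply_le_norm (by norm_num : (2:ENNReal) ≠ 0)
      ((lam • (T ^ n) x : lp (fun _ : ℕ => ℂ) 2) - e0) 0
    rw [lp.coeFn_sub] at h1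
    simp only [Pi.sub_apply] at h1
    rw [hy0, he00] at h1
    simpa using h1
  have hdist : dist e0 (lam • (T ^ n) x : lp (fun _ : ℕ => ℂ) 2)
      = ‖(lam • (T ^ n) x : lp (fun _ : ℕ => ℂ) 2) - e0‖ := by
    rw [dist_eq_norm, norm_sub_rev]
  rw [hdist] at hyd
  linarith
end

section
/- Let X be a complex Banach space, let T be a hypercyclic bounded linear operator on X, and let (f(n)) be a sequence of real numbers such that for some δ > 0, |f(n) − f(m)| > δ whenever n ≠ m. Then for every x ∈ HC(T), the set A = {θ ∈ ℝ : {(T^n x, e^{2πi f(n)θ}) : n ≥ 1} is dense in X × 𝕋} is residual in ℝ (contains a dense G_δ set) and its complement has Lebesgue measure zero. -/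
open Filter Topology
open MeasureTheory

lemma aux_measure_lower (μ γ a ε L : ℝ) (hε : 0 < ε) (hε4 : ε ≤ 4⁻¹) (hL : 0 < L)
    (hμ : 4 / L ≤ μ) :
    ENNReal.ofReal (ε * L) ≤
      volume {θ : ℝ | θ ∈ Set.Ioo a (a + L) ∧ ∃ m : ℤ, |μ * θ + γ - m| < ε} := by
  have hμ0 : 0 < μ := lt_of_lt_of_le (by positivity) hμ
  have hμL : 4 ≤ μ * L := by
    rw [div_le_iff₀ hL] at hμ; linarith [hμ]
  set m0 : ℤ := ⌈μ * a + γ + ε⌉ with hm0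
  set m1 : ℤ := ⌊μ * (a + L) + γ - ε⌋ with hm1
  set I : ℤ → Set ℝ := fun m => Set.Ioo ((m - γ - ε)/μ) ((m - γ + ε)/μ) with hI
  have hsub : ∀ m ∈ Finset.Icc m0 m1, I m ⊆
      {θ : ℝ | θ ∈ Set.Ioo a (a + L) ∧ ∃ mm : ℤ, |μ * θ + γ - mm| < ε} := by
    intro m hm θ hθ
    simp only [Finset.mem_Icc] at hm
    obtain ⟨h1, h2⟩ := hθ
    have hm0le : (μ * a + γ + ε) ≤ m := le_trans (Int.le_ceil _) (by exact_mod_cast hm.1)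
    have hm1ge : (m : ℝ) ≤ μ * (a + L) + γ - ε := le_trans (by exact_mod_cast hm.2) (Int.floor_le _)
    have hl : μ * θ > m - γ - ε := by
      rw [div_lt_iff₀ hμ0] at h1; linarith
    have hr : μ * θ < m - γ + ε := by
      rw [lt_div_iff₀ hμ0] at h2; linarith
    refine ⟨⟨?_, ?_⟩, ⟨m, ?_⟩⟩
    · nlinarith
    · nlinarith
    · rw [abs_lt]; constructor <;> linarith
  have hdisj : (↑(Finset.Icc m0 m1) : Set ℤ).PairwiseDisjoint I := by
    intro p _ q _ hpq
    rw [Function.onFun, Set.disjoint_left]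
    intro θ hθp hθq
    obtain ⟨hp1, hp2⟩ := hθp
    obtain ⟨hq1, hq2⟩ := hθq
    have h1 : (q - γ - ε)/μ < (p - γ + ε)/μ := lt_trans hq1 hp2
    have h2 : (p - γ - ε)/μ < (q - γ + ε)/μ := lt_trans hp1 hq2
    rw [div_lt_div_iff₀ hμ0 hμ0] at h1 h2
    have hq' : (q : ℝ) < p + 1 := by nlinarith
    have hp' : (p : ℝ) < q + 1 := by nlinarith
    have e1 : q < p + 1 := by exact_mod_cast hq'
    have e2 : p < q + 1 := by exact_mod_cast hp'
    omega
  have hmeas : ∀ m ∈ Finset.Icc m0 m1, MeasurableSet (I m) := fun m _ => measurableSet_Ioo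
  have hvol : volume (⋃ m ∈ Finset.Icc m0 m1, I m) = ∑ m ∈ Finset.Icc m0 m1, volume (I m) :=
    measure_biUnion_finset hdisj hmeas
  have hIm : ∀ m : ℤ, volume (I m) = ENNReal.ofReal (2 * ε / μ) := by
    intro m
    rw [hI]
    simp only [Real.volume_Ioo]
    congr 1
    field_simp
    ring
  have hcard : (μ * L / 2) ≤ ((Finset.Icc m0 m1).card : ℝ) := by
    rw [Int.card_Icc]
    have hfl : μ * (a + L) + γ - ε - 1 < (m1 : ℝ) := Int.sub_one_lt_floor _
    have hcl : (m0 : ℝ) < μ * a + γ + ε + 1 := Int.ceil_lt_add_one _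
    have hge : μ * L / 2 ≤ ((m1 + 1 - m0 : ℤ) : ℝ) := by push_cast; nlinarith
    calc μ * L / 2 ≤ ((m1 + 1 - m0 : ℤ) : ℝ) := hge
      _ ≤ (((m1 + 1 - m0 : ℤ).toNat : ℤ) : ℝ) := by exact_mod_cast Int.self_le_toNat _
  calc ENNReal.ofReal (ε * L)
      ≤ ENNReal.ofReal (((Finset.Icc m0 m1).card : ℝ) * (2 * ε / μ)) := by
        apply ENNReal.ofReal_le_ofReal
        have h1 : (μ * L / 2) * (2 * ε / μ) ≤ ((Finset.Icc m0 m1).card : ℝ) * (2 * ε / μ) :=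
          mul_le_mul_of_nonneg_right hcard (by positivity)
        have h2 : (μ * L / 2) * (2 * ε / μ) = ε * L := by field_simp
        linarith
    _ = ((Finset.Icc m0 m1).card : ENNReal) * ENNReal.ofReal (2 * ε / μ) := by
        rw [ENNReal.ofReal_mul (by positivity), ENNReal.ofReal_natCast]
    _ = ∑ m ∈ Finset.Icc m0 m1, volume (I m) := by
        rw [Finset.sum_congr rfl (fun m _ => hIm m), Finset.sum_const, nsmul_eq_mul]
    _ = volume (⋃ m ∈ Finset.Icc m0 m1, I m) := hvol.symm
    _ ≤ volume {θ : ℝ | θ ∈ Set.Ioo a (a + L) ∧ ∃ m : ℤ, |μ * θ + γ - m| < ε} := by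
        apply measure_mono
        exact Set.iUnion₂_subset hsub

lemma aux_null (E : Set ℝ) (ε : ℝ) (hε : 0 < ε) (hε1 : ε ≤ 1)
    (h : ∀ c r : ℝ, 0 < r →
      volume (E ∩ Metric.closedBall c r) ≤ ENNReal.ofReal ((1 - ε) * (2 * r))) :
    volume E = 0 := by
  by_contra hvol
  have hres : (volume.restrict E : Measure ℝ) ≠ 0 := by
    rw [Ne, Measure.restrict_eq_zero]; exact hvol
  have : ∀ᵐ θ ∂(volume.restrict E),
      Tendsto (fun r => volume (E ∩ Metric.closedBall θ r) / volume (Metric.closedBall θ r))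
        (𝓝[>] 0) (𝓝 1) := Besicovitch.ae_tendsto_measure_inter_div volume E
  have hne : (MeasureTheory.ae (volume.restrict E)).NeBot := ae_neBot.2 hres
  obtain ⟨θ, hθ⟩ := this.exists
  have hbound : ∀ᶠ r in 𝓝[>] (0:ℝ),
      volume (E ∩ Metric.closedBall θ r) / volume (Metric.closedBall θ r)
        ≤ ENNReal.ofReal (1 - ε) := by
    filter_upwards [self_mem_nhdsWithin] with r hr
    have hr0 : (0:ℝ) < r := hr
    rw [Real.volume_closedBall]
    apply ENNReal.div_le_of_le_mul
    calc volume (E ∩ Metric.closedBall θ r) ≤ ENNReal.ofReal ((1 - ε) * (2 * r)) := h θ r hr0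
      _ = ENNReal.ofReal (1 - ε) * ENNReal.ofReal (2 * r) := ENNReal.ofReal_mul (by linarith)
  have hle : (1 : ENNReal) ≤ ENNReal.ofReal (1 - ε) := le_of_tendsto hθ hbound
  have : ENNReal.ofReal (1 - ε) < 1 := by
    rw [← ENNReal.ofReal_one]
    exact ENNReal.ofReal_lt_ofReal_iff (by norm_num) |>.2 (by linarith)
  exact absurd hle (not_le.2 this)

lemma aux_unbdd (f : ℕ → ℝ) (δ : ℝ) (hδ : 0 < δ)
    (hf : ∀ n m : ℕ, n ≠ m → δ < |f n - f m|) (N : Set ℕ) (hN : N.Infinite) (C : ℝ) :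
    ∃ n ∈ N, C < |f n| := by
  by_contra hc
  push_neg at hc
  set g : ℕ → ℤ := fun n => ⌈f n / δ⌉ with hg
  have hinj : Set.InjOn g N := by
    intro a _ b _ hab
    by_contra hne
    have h1 : f a ≤ (g b : ℝ) * δ := by
      rw [← div_le_iff₀ hδ]; rw [← hab]; exact Int.le_ceil _
    have h2 : (g b : ℝ) * δ < f a + δ := by
      have hab' : ⌈f a / δ⌉ = g b := hab
      have h := Int.ceil_lt_add_one (f a / δ); rw [hab'] at h
      have h' := mul_lt_mul_of_pos_right h hδ
      have hdc : (f a / δ + 1) * δ = f a + δ := by field_simp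
      linarith
    have h3 : f b ≤ (g b : ℝ) * δ := by
      rw [← div_le_iff₀ hδ]; exact Int.le_ceil _
    have h4 : (g b : ℝ) * δ < f b + δ := by
      have h := Int.ceil_lt_add_one (f b / δ)
      have h' := mul_lt_mul_of_pos_right h hδ
      have hdc : (f b / δ + 1) * δ = f b + δ := by field_simp
      linarith
    have : |f a - f b| < δ := by rw [abs_lt]; constructor <;> linarith
    exact absurd (hf a b hne) (not_lt.2 this.le)
  have himg : g '' N ⊆ Set.Icc ⌈(-C) / δ⌉ ⌈C / δ⌉ := by
    rintro _ ⟨n, hn, rfl⟩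
    have := hc n hn
    rw [abs_le] at this
    exact ⟨Int.ceil_le_ceil (by gcongr; exact neg_le_neg_iff.mpr (le_refl C) |>.trans (by linarith [this.1])),
      Int.ceil_le_ceil (by gcongr; exact this.2)⟩
  exact (hN.image hinj) ((Set.finite_Icc _ _).subset himg)

lemma aux_orbit {X : Type*} [NormedAddCommGroup X] [NormedSpace ℂ X]
    (T : X →L[ℂ] X) (x : X) (hx : Dense (Set.range fun n : ℕ => (T ^ n) x))
    (d : X) (r : ℝ) (hr : 0 < r) :
    {n : ℕ | 1 ≤ n ∧ ‖(T ^ n) x - d‖ < r}.Infinite := by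
  rcases subsingleton_or_nontrivial X with hs | hnt
  · apply Set.infinite_of_injective_forall_mem (f := fun k : ℕ => k + 1)
    · intro a b hab; simpa using hab
    · intro k
      refine ⟨Nat.le_add_left 1 k, ?_⟩
      have : (T ^ (k+1)) x - d = 0 := Subsingleton.elim _ _
      rw [this, norm_zero]; exact hr
  · by_contra hinf
    rw [Set.not_infinite] at hinf
    set S := {n : ℕ | 1 ≤ n ∧ ‖(T ^ n) x - d‖ < r} with hS
    set F : Set X := (fun n : ℕ => (T ^ n) x) '' (S ∪ {0}) with hF
    have hFfin : F.Finite := (hinf.union (Set.finite_singleton 0)).image _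
    -- the ball is infinite
    obtain ⟨v, hv⟩ := exists_ne (0 : X)
    have hball : (Metric.ball d r).Infinite := by
      refine Set.infinite_of_injective_forall_mem
        (f := fun k : ℕ => d + (r / (k + 2)) • (‖v‖⁻¹ • v)) ?_ ?_
      · intro a b hab
        simp only [add_right_inj] at hab
        have hw : (‖v‖⁻¹ • v) ≠ 0 := by
          simp [smul_eq_zero, hv, norm_eq_zero, inv_eq_zero]
        have hdd : (r / (a + 2) : ℝ) = r / (b + 2) := by
          by_contra hne
          apply hw
          have hz := sub_smul (r / (a+2) : ℝ) (r / (b+2)) (‖v‖⁻¹ • v)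
          rw [hab, sub_self] at hz
          rcases smul_eq_zero.1 hz with h | h
          · exact absurd (sub_eq_zero.1 h) hne
          · exact h
        rw [div_eq_div_iff (by positivity) (by positivity)] at hdd
        have hc := mul_left_cancel₀ hr.ne' hdd
        have : (a : ℝ) = b := by linarith
        exact_mod_cast this
      · intro k
        rw [Metric.mem_ball, dist_eq_norm]
        have hwn : ‖‖v‖⁻¹ • v‖ = 1 := by
          rw [norm_smul, norm_inv, norm_norm, inv_mul_cancel₀ (norm_ne_zero_iff.2 hv)]
        have : ‖d + (r / (k + 2)) • (‖v‖⁻¹ • v) - d‖ = r / (k+2) := by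
          rw [add_sub_cancel_left, norm_smul, hwn, mul_one, Real.norm_eq_abs,
            abs_of_pos (by positivity)]
        rw [this]
        rw [div_lt_iff₀ (by positivity)]
        nlinarith [hr]
    obtain ⟨u, hu⟩ := (hball.diff hFfin).nonempty
    have hU : IsOpen (Metric.ball d r \ F) := Metric.isOpen_ball.sdiff hFfin.isClosed
    obtain ⟨ρ, hρ, hρsub⟩ := Metric.isOpen_iff.1 hU u hu
    obtain ⟨p, hp1, hp2⟩ := Metric.dense_iff.1 hx u ρ hρ
    obtain ⟨n, rfl⟩ := hp2
    have hmem := hρsub hp1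
    have hball' : ‖(T ^ n) x - d‖ < r := by
      have := hmem.1; rw [Metric.mem_ball, dist_eq_norm] at this; exact this
    have hnotF : (T ^ n) x ∉ F := hmem.2
    have hn1 : 1 ≤ n := by
      rcases Nat.eq_zero_or_pos n with h | h
      · exact absurd ⟨0, Or.inr rfl, by rw [h]⟩ hnotF
      · exact h
    exact hnotF ⟨n, Or.inl ⟨hn1, hball'⟩, rfl⟩

lemma aux_exp (u v : ℝ) (m : ℤ) (h : |u - v - m| ≤ 1/7) :
    ‖Complex.exp (2*Real.pi*Complex.I*u) - Complex.exp (2*Real.pi*Complex.I*v)‖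
      ≤ 4*Real.pi*|u - v - m| := by
  have hsplit : Complex.exp (2*Real.pi*Complex.I*u) - Complex.exp (2*Real.pi*Complex.I*v)
      = Complex.exp (2*Real.pi*Complex.I*v) *
        (Complex.exp (2*Real.pi*Complex.I*((u:ℂ) - v - m)) - 1) := by
    rw [mul_sub, mul_one, ← Complex.exp_add]
    congr 1
    rw [show (2*(Real.pi:ℂ)*Complex.I*v + 2*Real.pi*Complex.I*((u:ℂ) - v - m))
        = 2*Real.pi*Complex.I*u - m*(2*Real.pi*Complex.I) by ring]
    rw [Complex.exp_sub, Complex.exp_int_mul_two_pi_mul_I, div_one]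
  rw [hsplit, norm_mul]
  have habs1 : ‖Complex.exp (2*Real.pi*Complex.I*(v:ℂ))‖ = 1 := by
    rw [Complex.norm_exp]
    norm_num [Complex.mul_re]
  have hw : ‖2*Real.pi*Complex.I*((u:ℂ) - v - m)‖ = 2*Real.pi*|u - v - m| := by
    have : ((u:ℂ) - v - m) = ((u - v - m : ℝ) : ℂ) := by push_cast; ring
    rw [this]
    simp only [norm_mul, Complex.norm_I, Complex.norm_real, Complex.norm_two, Real.norm_eq_abs,
      abs_of_pos Real.pi_pos]
    ring
  have hsmall : ‖2*Real.pi*Complex.I*((u:ℂ) - v - m)‖ ≤ 1 := by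
    rw [hw]
    nlinarith [Real.pi_lt_d2, abs_nonneg (u - v - m), Real.pi_pos]
  calc ‖Complex.exp (2*Real.pi*Complex.I*(v:ℂ))‖ *
        ‖Complex.exp (2*Real.pi*Complex.I*((u:ℂ) - v - m)) - 1‖
      ≤ 1 * (2 * ‖2*Real.pi*Complex.I*((u:ℂ) - v - m)‖) := by
        rw [habs1]
        exact mul_le_mul_of_nonneg_left (Complex.norm_exp_sub_one_le hsmall) zero_le_one
    _ = 4*Real.pi*|u - v - m| := by rw [hw]; ring

lemma aux_O (f : ℕ → ℝ) (δ : ℝ) (hδ : 0 < δ)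
    (hf : ∀ n m : ℕ, n ≠ m → δ < |f n - f m|) (N : Set ℕ) (hN : N.Infinite)
    (s ε : ℝ) (hε : 0 < ε) (hε4 : ε ≤ 4⁻¹) :
    IsOpen {θ : ℝ | ∃ n ∈ N, ∃ mm : ℤ, |f n * θ - s - mm| < ε} ∧
    Dense {θ : ℝ | ∃ n ∈ N, ∃ mm : ℤ, |f n * θ - s - mm| < ε} ∧
    volume {θ : ℝ | ∃ n ∈ N, ∃ mm : ℤ, |f n * θ - s - mm| < ε}ᶜ = 0 := by
  set O := {θ : ℝ | ∃ n ∈ N, ∃ mm : ℤ, |f n * θ - s - mm| < ε} with hO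
  have hopen : IsOpen O := by
    have : O = ⋃ n ∈ N, ⋃ mm : ℤ, {θ : ℝ | |f n * θ - s - mm| < ε} := by
      ext θ; simp [hO, Set.mem_iUnion]
    rw [this]
    refine isOpen_biUnion fun n _ => isOpen_iUnion fun mm => ?_
    exact isOpen_lt (Continuous.abs (by continuity)) continuous_const
  have hnull : volume Oᶜ = 0 := by
    apply aux_null Oᶜ ε hε (by linarith)
    intro c r hr
    obtain ⟨n, hnN, hfn⟩ := aux_unbdd f δ hδ hf N hN (2 / r)
    set μ := |f n| with hμdef
    set γ := if 0 ≤ f n then -s else s with hγdef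
    have hμ4 : 4 / (2 * r) ≤ μ := by
      rw [div_le_iff₀ (by linarith)]
      rw [div_lt_iff₀ hr] at hfn
      nlinarith
    have hsub : {θ : ℝ | θ ∈ Set.Ioo (c - r) ((c - r) + 2 * r) ∧ ∃ m : ℤ, |μ * θ + γ - m| < ε}
        ⊆ O ∩ Metric.closedBall c r := by
      rintro θ ⟨hθI, m, hm⟩
      constructor
      · refine ⟨n, hnN, ?_⟩
        rcases le_or_gt 0 (f n) with hsign | hsign
        · refine ⟨m, ?_⟩
          have : μ * θ + γ - m = f n * θ - s - m := by
            rw [hμdef, hγdef, abs_of_nonneg hsign, if_pos hsign]; ring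
          rwa [this] at hm
        · refine ⟨-m, ?_⟩
          have : μ * θ + γ - m = -(f n * θ - s - (-m)) := by
            rw [hμdef, hγdef, abs_of_neg hsign, if_neg (not_le.2 hsign)]; push_cast; ring
          rw [this, abs_neg] at hm
          convert hm using 3
          push_cast; ring
      · rw [Real.closedBall_eq_Icc]
        have h1 := hθI.1; have h2 := hθI.2
        constructor <;> [linarith; linarith]
    have hlow : ENNReal.ofReal (ε * (2 * r)) ≤ volume (O ∩ Metric.closedBall c r) :=
      le_trans (aux_measure_lower μ γ (c - r) ε (2 * r) hε hε4 (by linarith) hμ4)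
        (measure_mono hsub)
    have hdisj : Disjoint (Oᶜ ∩ Metric.closedBall c r) (O ∩ Metric.closedBall c r) :=
      Disjoint.mono Set.inter_subset_left Set.inter_subset_left disjoint_compl_left
    have hunion : volume (Oᶜ ∩ Metric.closedBall c r) + volume (O ∩ Metric.closedBall c r)
        ≤ ENNReal.ofReal (2 * r) := by
      rw [← measure_union hdisj (hopen.measurableSet.inter measurableSet_closedBall)]
      rw [← Real.volume_closedBall c r]
      exact measure_mono (Set.union_subset Set.inter_subset_right Set.inter_subset_right)
    have hstep : volume (Oᶜ ∩ Metric.closedBall c r) + ENNReal.ofReal (ε * (2 * r))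
        ≤ ENNReal.ofReal (2 * r) := le_trans (add_le_add_right hlow _) hunion
    have := ENNReal.le_sub_of_add_le_right (by simp) hstep
    calc volume (Oᶜ ∩ Metric.closedBall c r)
        ≤ ENNReal.ofReal (2 * r) - ENNReal.ofReal (ε * (2 * r)) := this
      _ = ENNReal.ofReal (2 * r - ε * (2 * r)) := (ENNReal.ofReal_sub _ (by positivity)).symm
      _ = ENNReal.ofReal ((1 - ε) * (2 * r)) := by ring_nf
  refine ⟨hopen, ?_, hnull⟩
  rw [Metric.dense_iff]
  intro c r hr
  by_contra hemp
  rw [Set.not_nonempty_iff_eq_empty] at hemp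
  have hsub : Metric.ball c r ⊆ Oᶜ := by
    rw [Set.subset_compl_iff_disjoint_right, Set.disjoint_iff_inter_eq_empty]
    exact hemp
  have h1 : volume (Metric.ball c r) ≤ 0 := hnull ▸ measure_mono hsub
  rw [Real.volume_ball] at h1
  have h2 : (0:ENNReal) < ENNReal.ofReal (2 * r) := ENNReal.ofReal_pos.2 (by linarith)
  exact absurd h1 (not_le.2 h2)

/-- Let `X` be a complex Banach space, `T` a hypercyclic bounded
linear operator on `X`, and `(f(n))` a sequence of reals with `|f(n) − f(m)| > δ`
for `n ≠ m`, for some `δ > 0`. Then for every `x ∈ HC(T)` the set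
`A = {θ ∈ ℝ : {(T^n x, e^{2πi f(n)θ}) : n ≥ 1} is dense in X × 𝕋}` is residual in
`ℝ` and its complement has Lebesgue measure zero. -/
theorem stmt17 {X : Type*} [NormedAddCommGroup X] [NormedSpace ℂ X] [CompleteSpace X]
    (T : X →L[ℂ] X) (f : ℕ → ℝ) (δ : ℝ) (hδ : 0 < δ)
    (hf : ∀ n m : ℕ, n ≠ m → δ < |f n - f m|)
    (x : X) (hx : Dense (Set.range fun n : ℕ => (T ^ n) x)) :
    {θ : ℝ | ∀ (y : X) (z : ℂ), ‖z‖ = 1 →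
        (y, z) ∈ closure {q : X × ℂ | ∃ n : ℕ, 1 ≤ n ∧
          q = ((T ^ n) x,
            Complex.exp (2 * Real.pi * Complex.I * Complex.ofReal (f n) * (θ : ℂ)))}}
      ∈ residual ℝ ∧
    MeasureTheory.volume
      {θ : ℝ | ∀ (y : X) (z : ℂ), ‖z‖ = 1 →
        (y, z) ∈ closure {q : X × ℂ | ∃ n : ℕ, 1 ≤ n ∧
          q = ((T ^ n) x,
            Complex.exp (2 * Real.pi * Complex.I * Complex.ofReal (f n) * (θ : ℂ)))}}ᶜ
      = 0 := by
  set A := {θ : ℝ | ∀ (y : X) (z : ℂ), ‖z‖ = 1 →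
        (y, z) ∈ closure {q : X × ℂ | ∃ n : ℕ, 1 ≤ n ∧
          q = ((T ^ n) x,
            Complex.exp (2 * Real.pi * Complex.I * Complex.ofReal (f n) * (θ : ℂ)))}} with hA
  set ε' : ℕ → ℝ := fun k => min ((1/((k:ℝ)+1))/13) (1/7) with hε'
  set O : ℕ → ℚ → ℕ → Set ℝ := fun m q k =>
    {θ : ℝ | ∃ n ∈ {n : ℕ | 1 ≤ n ∧ ‖(T ^ n) x - (T ^ m) x‖ < 1/((k:ℝ)+1)},
      ∃ mm : ℤ, |f n * θ - (q:ℝ) - mm| < ε' k} with hOdef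
  have hε'pos : ∀ k, 0 < ε' k := fun k => lt_min (by positivity) (by norm_num)
  have hε'7 : ∀ k, ε' k ≤ 1/7 := fun k => min_le_right _ _
  have hO : ∀ (m : ℕ) (q : ℚ) (k : ℕ), IsOpen (O m q k) ∧ Dense (O m q k) ∧
      volume (O m q k)ᶜ = 0 := by
    intro m q k
    exact aux_O f δ hδ hf _ (aux_orbit T x hx ((T ^ m) x) (1/((k:ℝ)+1)) (by positivity))
      (q : ℝ) (ε' k) (hε'pos k) (le_trans (hε'7 k) (by norm_num))
  have hincl : (⋂ m : ℕ, ⋂ q : ℚ, ⋂ k : ℕ, O m q k) ⊆ A := by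
    intro θ hθ
    simp only [Set.mem_iInter] at hθ
    intro y z hz
    rw [Metric.mem_closure_iff]
    intro η hη
    -- pick m with T^m x close to y
    obtain ⟨p, hp1, hp2⟩ := Metric.dense_iff.1 hx y (η/2) (by linarith)
    obtain ⟨m, rfl⟩ := hp2
    -- pick rational q close to arg z / (2π)
    have hzexp : z = Complex.exp (2*Real.pi*Complex.I*((z.arg/(2*Real.pi) : ℝ) : ℂ)) := by
      have h1 := Complex.norm_mul_exp_arg_mul_I z
      rw [hz, Complex.ofReal_one, one_mul] at h1
      have hπ : (Real.pi : ℂ) ≠ 0 := by exact_mod_cast Real.pi_ne_zero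
      have h2 : (2*(Real.pi:ℂ)*Complex.I*((z.arg/(2*Real.pi) : ℝ) : ℂ)) = ↑z.arg * Complex.I := by
        push_cast
        field_simp
      rw [h2]
      exact h1.symm
    set ρ : ℝ := min (η/26) (1/26) with hρ
    have hρpos : 0 < ρ := lt_min (by linarith) (by norm_num)
    obtain ⟨q, hq⟩ := exists_rat_near (z.arg/(2*Real.pi)) hρpos
    -- pick k with 1/(k+1) < η/2
    obtain ⟨k, hk⟩ := exists_nat_one_div_lt (show (0:ℝ) < η/2 by linarith)
    have hk' : 1/((k:ℝ)+1) < η/2 := by exact_mod_cast hk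
    -- use θ ∈ O m q k
    obtain ⟨n, ⟨hn1, hnorm⟩, mm, habs⟩ := hθ m q k
    refine ⟨((T ^ n) x,
      Complex.exp (2 * Real.pi * Complex.I * Complex.ofReal (f n) * (θ : ℂ))), ⟨n, hn1, rfl⟩, ?_⟩
    rw [Prod.dist_eq]
    have hXdist : dist y ((T ^ n) x) < η := by
      have h1 : dist y ((T ^ m) x) < η/2 := by rwa [Metric.mem_ball, dist_comm] at hp1
      have h2 : dist ((T ^ m) x) ((T ^ n) x) < η/2 := by
        rw [dist_eq_norm, norm_sub_rev]
        exact lt_trans hnorm hk'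
      calc dist y ((T ^ n) x) ≤ dist y ((T ^ m) x) + dist ((T ^ m) x) ((T ^ n) x) :=
            dist_triangle _ _ _
        _ < η := by linarith
    have hCdist : dist z (Complex.exp (2 * Real.pi * Complex.I * Complex.ofReal (f n) * (θ : ℂ))) < η := by
      have hexpeq : Complex.exp (2 * Real.pi * Complex.I * Complex.ofReal (f n) * (θ : ℂ))
          = Complex.exp (2*Real.pi*Complex.I*((f n * θ : ℝ) : ℂ)) := by
        congr 1
        push_cast
        ring
      -- first leg: z to exp(2πi q)
      have hleg1 : dist z (Complex.exp (2*Real.pi*Complex.I*((q:ℝ):ℂ))) < η/2 := by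
        rw [Complex.dist_eq, hzexp]
        have hb := aux_exp (z.arg/(2*Real.pi)) (q:ℝ) 0 (by
          push_cast
          rw [sub_zero]
          exact le_trans hq.le (le_trans (min_le_right _ _) (by norm_num)))
        have : |z.arg/(2*Real.pi) - (q:ℝ) - (0:ℤ)| < ρ := by
          push_cast; rw [sub_zero]; exact hq
        calc ‖Complex.exp (2*Real.pi*Complex.I*((z.arg/(2*Real.pi) : ℝ) : ℂ)) -
              Complex.exp (2*Real.pi*Complex.I*((q:ℝ):ℂ))‖
            ≤ 4*Real.pi*|z.arg/(2*Real.pi) - (q:ℝ) - (0:ℤ)| := hb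
          _ < 4*Real.pi*ρ := by
              apply mul_lt_mul_of_pos_left this (by positivity)
          _ ≤ 4*Real.pi*(η/26) := by
              apply mul_le_mul_of_nonneg_left (min_le_left _ _) (by positivity)
          _ < η/2 := by nlinarith [Real.pi_lt_d2, hη]
      -- second leg: exp(2πi q) to exp(2πi f n θ)
      have hleg2 : dist (Complex.exp (2*Real.pi*Complex.I*((q:ℝ):ℂ)))
          (Complex.exp (2*Real.pi*Complex.I*((f n * θ : ℝ) : ℂ))) < η/2 := by
        rw [Complex.dist_eq, ← norm_neg, neg_sub]
        have hb := aux_exp (f n * θ) (q:ℝ) mm (le_trans habs.le (hε'7 k))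
        calc ‖Complex.exp (2*Real.pi*Complex.I*((f n * θ : ℝ) : ℂ)) -
              Complex.exp (2*Real.pi*Complex.I*((q:ℝ):ℂ))‖
            ≤ 4*Real.pi*|f n * θ - (q:ℝ) - mm| := hb
          _ < 4*Real.pi*(ε' k) := mul_lt_mul_of_pos_left habs (by positivity)
          _ ≤ 4*Real.pi*((1/((k:ℝ)+1))/13) :=
              mul_le_mul_of_nonneg_left (min_le_left _ _) (by positivity)
          _ < 1/((k:ℝ)+1) := by
              have hkpos : (0:ℝ) < 1/((k:ℝ)+1) := by positivity
              nlinarith [Real.pi_lt_d2]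
          _ < η/2 := hk'
      rw [hexpeq]
      calc dist z (Complex.exp (2*Real.pi*Complex.I*((f n * θ : ℝ) : ℂ)))
          ≤ dist z (Complex.exp (2*Real.pi*Complex.I*((q:ℝ):ℂ))) +
            dist (Complex.exp (2*Real.pi*Complex.I*((q:ℝ):ℂ)))
              (Complex.exp (2*Real.pi*Complex.I*((f n * θ : ℝ) : ℂ))) := dist_triangle _ _ _
        _ < η := by linarith
    exact max_lt hXdist hCdist
  constructor
  · refine Filter.mem_of_superset ?_ hincl
    refine countable_iInter_mem.2 fun m => countable_iInter_mem.2 fun q =>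
      countable_iInter_mem.2 fun k => residual_of_dense_open (hO m q k).1 (hO m q k).2.1
  · apply measure_mono_null (Set.compl_subset_compl.2 hincl)
    simp only [Set.compl_iInter]
    exact measure_iUnion_null fun m => measure_iUnion_null fun q =>
      measure_iUnion_null fun k => (hO m q k).2.2
end

section
/- Let X be a complex Banach space and let T be a hypercyclic bounded linear operator on X. Then for every x ∈ HC(T), the set B of sequences (λ_1, λ_2, …) ∈ 𝕋^ℕ such that {λ_n T^n x : n ≥ 1} is dense in X is residual in 𝕋^ℕ equipped with the product topology. -/
open Filter Topology

/-- Let `X` be a complex Banach space and `T` a hypercyclic bounded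
linear operator on `X`. Then for every `x ∈ HC(T)`, the set of sequences
`Λ = (λ_n) ∈ 𝕋^ℕ` such that `{λ_n T^n x : n ≥ 1}` is dense in `X` is residual in
`𝕋^ℕ` (with the product topology). -/
theorem stmt19 {X : Type*} [NormedAddCommGroup X] [NormedSpace ℂ X] [CompleteSpace X]
    (T : X →L[ℂ] X) (x : X)
    (hx : Dense (Set.range fun n : ℕ => (T ^ n) x)) :
    {Λ : ℕ → {z : ℂ // ‖z‖ = 1} |
        Dense {y : X | ∃ n : ℕ, 1 ≤ n ∧ y = (Λ n : ℂ) • (T ^ n) x}}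
      ∈ residual (ℕ → {z : ℂ // ‖z‖ = 1}) := by
  classical
  by_cases hsub : Subsingleton X
  · have heq : {Λ : ℕ → {z : ℂ // ‖z‖ = 1} |
        Dense {y : X | ∃ n : ℕ, 1 ≤ n ∧ y = (Λ n : ℂ) • (T ^ n) x}} = Set.univ := by
      ext Λ
      simp only [Set.mem_setOf_eq, Set.mem_univ, iff_true]
      intro z
      have hz : z = (Λ 1 : ℂ) • (T ^ 1) x := Subsingleton.elim _ _
      exact subset_closure ⟨1, le_refl 1, hz⟩
    rw [heq]
    exact Filter.univ_mem
  · have : Nontrivial X := not_subsingleton_iff_nontrivial.mp hsub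
    set f : ℕ → X := fun n => (T ^ n) x with hf
    set U : ℕ → ℕ → Set (ℕ → {z : ℂ // ‖z‖ = 1}) :=
      fun k m => {Λ | ∃ n : ℕ, 1 ≤ n ∧ ‖(Λ n : ℂ) • f n - f k‖ < 1 / (m + 1)} with hU
    have hopen : ∀ k m, IsOpen (U k m) := by
      intro k m
      have : U k m = ⋃ n : ℕ, ⋃ _ : 1 ≤ n,
          {Λ : ℕ → {z : ℂ // ‖z‖ = 1} | ‖(Λ n : ℂ) • f n - f k‖ < 1 / (m + 1)} := by
        ext Λ; simp [hU, Set.mem_iUnion]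
      rw [this]
      refine isOpen_iUnion fun n => isOpen_iUnion fun _ => ?_
      have hc : Continuous fun Λ : ℕ → {z : ℂ // ‖z‖ = 1} =>
          ‖(Λ n : ℂ) • f n - f k‖ := by
        exact (((continuous_subtype_val.comp (continuous_apply n)).smul
          continuous_const).sub continuous_const).norm
      exact isOpen_lt hc continuous_const
    have hdense : ∀ k m, Dense (U k m) := by
      intro k m
      have hε : (0 : ℝ) < 1 / (m + 1) := by positivity
      rw [dense_iff_inter_open]
      rintro V hV ⟨Λ₀, hΛ₀⟩
      obtain ⟨I, u, hu, hIsub⟩ := isOpen_pi_iff.mp hV Λ₀ hΛ₀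
      set M : ℕ := max (I.sup id + 1) 1 with hM
      have hdtail : Dense (Set.range f \ (f '' Set.Iio M)) :=
        hx.diff_finite ((Set.finite_Iio M).image f)
      obtain ⟨y, hyball, hyrange, hynot⟩ := Metric.dense_iff.mp hdtail (f k) _ hε
      obtain ⟨n, rfl⟩ := hyrange
      have hnM : M ≤ n := by
        by_contra h
        exact hynot ⟨n, Set.mem_Iio.mpr (by omega), rfl⟩
      have hn1 : 1 ≤ n := le_trans (le_max_right _ 1) hnM
      have hnI : n ∉ I := by
        intro hn
        have : n ≤ I.sup id := Finset.le_sup (f := id) hn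
        omega
      set Λ' : ℕ → {z : ℂ // ‖z‖ = 1} :=
        Function.update Λ₀ n ⟨1, by simp⟩ with hΛ'
      refine ⟨Λ', hIsub ?_, ?_⟩
      · intro i hi
        have : Λ' i = Λ₀ i := Function.update_of_ne (by rintro rfl; exact hnI hi) _ _
        rw [this]
        exact (hu i hi).2
      · refine ⟨n, hn1, ?_⟩
        have : Λ' n = ⟨1, by simp⟩ := Function.update_self _ _ _
        rw [this]
        simpa [Metric.mem_ball, dist_eq_norm] using hyball
    have hres : (⋂ k, ⋂ m, U k m) ∈ residual (ℕ → {z : ℂ // ‖z‖ = 1}) :=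
      (countable_iInter_mem.mpr fun k => countable_iInter_mem.mpr fun m =>
        residual_of_dense_open (hopen k m) (hdense k m))
    refine Filter.mem_of_superset hres ?_
    intro Λ hΛ
    simp only [Set.mem_iInter] at hΛ
    simp only [Set.mem_setOf_eq]
    rw [Metric.dense_iff]
    intro z ε hε
    obtain ⟨w, hwball, hwrange⟩ := Metric.dense_iff.mp hx z (ε / 2) (by linarith)
    obtain ⟨k, rfl⟩ := hwrange
    obtain ⟨m, hm⟩ := exists_nat_one_div_lt (show (0:ℝ) < ε / 2 by linarith)
    obtain ⟨n, hn1, hnlt⟩ := hΛ k m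
    refine ⟨(Λ n : ℂ) • f n, Metric.mem_ball'.mpr ?_, ⟨n, hn1, rfl⟩⟩
    have h1 : dist z (f k) < ε / 2 := Metric.mem_ball'.mp hwball
    have h2 : dist (f k) ((Λ n : ℂ) • f n) < ε / 2 := by
      rw [dist_eq_norm, ← norm_neg]
      simpa using lt_trans hnlt hm
    calc dist z ((Λ n : ℂ) • f n) ≤ dist z (f k) + dist (f k) ((Λ n : ℂ) • f n) :=
          dist_triangle _ _ _
      _ < ε := by linarith
end
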